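/- arXiv:1202.2990 — 4 statements merged into one kernel-verified Lean document; each statement's English description precedes it below -/
import Mathlib

section
/- Let n ≥ 1, let x = (x_1, …, x_n) ∈ ℝ^n with Σ_{i=1}^n x_i² = 1, and let ε_1, …, ε_n be independent random variables with Pr(ε_i = 1) = Pr(ε_i = −1) = 1/2. Then Pr(|Σ_{i=1}^n ε_i x_i| ≤ 1) ≥ 0.36. -/
open Classical Finset

/-- The sign `±1` associated to a Boolean: this encodes a Rademacher variable. -/
noncomputable def sgn (b : Bool) : ℝ := if b then 1 else -1

/-- Probability of an event under the uniform measure on the `2^n` sign vectors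
`ε ∈ {-1,1}^n`, encoded as Boolean vectors `σ : Fin n → Bool`. -/
noncomputable def prSign (n : ℕ) (P : (Fin n → Bool) → Prop) : ℝ :=
  ((Finset.univ.filter P).card : ℝ) / 2 ^ n

set_option maxHeartbeats 2000000



lemma rpow_chord {ρ θa θb θ va vb : ℝ} (hρ : 0 < ρ) (hab : θa < θb)
    (h1 : θa ≤ θ) (h2 : θ ≤ θb) (ha : ρ ^ θa ≤ va) (hb : ρ ^ θb ≤ vb) :
    ρ ^ θ ≤ va + (θ - θa) * ((vb - va) / (θb - θa)) := by
  set l : ℝ := (θ - θa) / (θb - θa) with hl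
  have hd : 0 < θb - θa := by linarith
  have hl0 : 0 ≤ l := div_nonneg (by linarith) hd.le
  have hl1 : l ≤ 1 := by
    rw [hl, div_le_one hd]; linarith
  have hθ : Real.log ρ * θ = (1 - l) * (Real.log ρ * θa) + l * (Real.log ρ * θb) := by
    have : (1 - l) * θa + l * θb = θ := by
      rw [hl]; field_simp; ring
    linear_combination (Real.log ρ) * this.symm
  have hc := convexOn_exp.2 (Set.mem_univ (Real.log ρ * θa)) (Set.mem_univ (Real.log ρ * θb))
      (by linarith : (0:ℝ) ≤ 1 - l) hl0 (by ring)
  simp only [smul_eq_mul] at hc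
  rw [← hθ] at hc
  have e1 : ρ ^ θ = Real.exp (Real.log ρ * θ) := Real.rpow_def_of_pos hρ θ
  have e2 : ρ ^ θa = Real.exp (Real.log ρ * θa) := Real.rpow_def_of_pos hρ θa
  have e3 : ρ ^ θb = Real.exp (Real.log ρ * θb) := Real.rpow_def_of_pos hρ θb
  rw [← e1, ← e2, ← e3] at hc
  have hfin : (1 - l) * (ρ ^ θa) + l * (ρ ^ θb) ≤ (1 - l) * va + l * vb := by
    have g1 := mul_le_mul_of_nonneg_left ha (by linarith : (0:ℝ) ≤ 1 - l)
    have g2 := mul_le_mul_of_nonneg_left hb hl0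
    linarith
  have : va + (θ - θa) * ((vb - va) / (θb - θa)) = (1 - l) * va + l * vb := by
    rw [hl]; field_simp; ring
  rw [this]
  linarith

lemma rpow_quarter_le {ρ va : ℝ} (hρ : 0 < ρ) (hva : 0 ≤ va) (k : ℕ) (h : ρ ^ k ≤ va ^ 4) :
    ρ ^ ((k : ℝ) / 4) ≤ va := by
  have key : (ρ ^ ((k:ℝ)/4)) ^ (4:ℕ) = ρ ^ k := by
    rw [← Real.rpow_natCast (ρ ^ ((k:ℝ)/4)) 4, ← Real.rpow_mul hρ.le]
    norm_num
  have h4 : (ρ ^ ((k:ℝ)/4)) ^ (4:ℕ) ≤ va ^ (4:ℕ) := by rw [key]; exact h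
  exact le_of_pow_le_pow_left₀ (by norm_num) hva h4



lemma rpow_quarter_le' {ρ va θ : ℝ} (hρ : 0 < ρ) (hva : 0 ≤ va) (k : ℕ) (hθ : θ = (k:ℝ)/4)
    (h : ρ ^ k ≤ va ^ 4) : ρ ^ θ ≤ va := by
  rw [hθ]; exact rpow_quarter_le hρ hva k h

lemma piece_1_1 (v : ℝ) (h1 : (0 : ℝ) ≤ v) (h2 : v ≤ (7/800 : ℝ)) :
    (1 : ℝ) + (-1777/875 : ℝ) * v ≤ 1 - 2*v + (517743/800000 : ℝ)*v^2 + (-1/18 : ℝ)*v^3 + (-25/4608 : ℝ)*v^4 := by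
  nlinarith [mul_nonneg (sub_nonneg.2 h1) (sub_nonneg.2 h2), sq_nonneg (v - (7/1600 : ℝ)), sq_nonneg v, mul_nonneg (mul_nonneg (sub_nonneg.2 h1) (sub_nonneg.2 h2)) (sub_nonneg.2 h1), mul_nonneg (mul_nonneg (sub_nonneg.2 h1) (sub_nonneg.2 h2)) (sub_nonneg.2 h2)]

lemma piece_1_2 (v : ℝ) (h1 : (7/800 : ℝ) ≤ v) (h2 : v ≤ (7/400 : ℝ)) :
    (99971/100000 : ℝ) + (-1748/875 : ℝ) * v ≤ 1 - 2*v + (47933/75000 : ℝ)*v^2 + (-502153/9600000 : ℝ)*v^3 + (-25/4608 : ℝ)*v^4 := by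
  nlinarith [mul_nonneg (sub_nonneg.2 h1) (sub_nonneg.2 h2), sq_nonneg (v - (21/1600 : ℝ)), sq_nonneg v, mul_nonneg (mul_nonneg (sub_nonneg.2 h1) (sub_nonneg.2 h2)) (sub_nonneg.2 h1), mul_nonneg (mul_nonneg (sub_nonneg.2 h1) (sub_nonneg.2 h2)) (sub_nonneg.2 h2)]

lemma piece_1_3 (v : ℝ) (h1 : (7/400 : ℝ) ≤ v) (h2 : v ≤ (21/800 : ℝ)) :
    (19981/20000 : ℝ) + (-49/25 : ℝ) * v ≤ 1 - 2*v + (3037981/4800000 : ℝ)*v^2 + (-1467713/28800000 : ℝ)*v^3 + (-25/4608 : ℝ)*v^4 := by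
  nlinarith [mul_nonneg (sub_nonneg.2 h1) (sub_nonneg.2 h2), sq_nonneg (v - (7/320 : ℝ)), sq_nonneg v, mul_nonneg (mul_nonneg (sub_nonneg.2 h1) (sub_nonneg.2 h2)) (sub_nonneg.2 h1), mul_nonneg (mul_nonneg (sub_nonneg.2 h1) (sub_nonneg.2 h2)) (sub_nonneg.2 h2)]

lemma piece_1_4 (v : ℝ) (h1 : (21/800 : ℝ) ≤ v) (h2 : v ≤ (7/200 : ℝ)) :
    (9983/10000 : ℝ) + (-338/175 : ℝ) * v ≤ 1 - 2*v + (3012917/4800000 : ℝ)*v^2 + (-718991/14400000 : ℝ)*v^3 + (-25/4608 : ℝ)*v^4 := by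
  nlinarith [mul_nonneg (sub_nonneg.2 h1) (sub_nonneg.2 h2), sq_nonneg (v - (49/1600 : ℝ)), sq_nonneg v, mul_nonneg (mul_nonneg (sub_nonneg.2 h1) (sub_nonneg.2 h2)) (sub_nonneg.2 h1), mul_nonneg (mul_nonneg (sub_nonneg.2 h1) (sub_nonneg.2 h2)) (sub_nonneg.2 h2)]

lemma piece_2_1 (v : ℝ) (h1 : (0 : ℝ) ≤ v) (h2 : v ≤ (7/100 : ℝ)) :
    (1 : ℝ) + (-14489/7000 : ℝ) * v ≤ 1 - 2*v + (22933/37500 : ℝ)*v^2 + (-1/18 : ℝ)*v^3 + (-25/4608 : ℝ)*v^4 := by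
  nlinarith [mul_nonneg (sub_nonneg.2 h1) (sub_nonneg.2 h2), sq_nonneg (v - (7/200 : ℝ)), sq_nonneg v, mul_nonneg (mul_nonneg (sub_nonneg.2 h1) (sub_nonneg.2 h2)) (sub_nonneg.2 h1), mul_nonneg (mul_nonneg (sub_nonneg.2 h1) (sub_nonneg.2 h2)) (sub_nonneg.2 h2)]

lemma piece_2_2 (v : ℝ) (h1 : (7/100 : ℝ) ≤ v) (h2 : v ≤ (7/50 : ℝ)) :
    (48951/50000 : ℝ) + (-12391/7000 : ℝ) * v ≤ 1 - 2*v + (1412917/2400000 : ℝ)*v^2 + (-53417/1152000 : ℝ)*v^3 + (-25/4608 : ℝ)*v^4 := by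
  nlinarith [mul_nonneg (sub_nonneg.2 h1) (sub_nonneg.2 h2), sq_nonneg (v - (21/200 : ℝ)), sq_nonneg v, mul_nonneg (mul_nonneg (sub_nonneg.2 h1) (sub_nonneg.2 h2)) (sub_nonneg.2 h1), mul_nonneg (mul_nonneg (sub_nonneg.2 h1) (sub_nonneg.2 h2)) (sub_nonneg.2 h2)]

lemma cos_core_1 (w : ℝ) (hw0 : 0 ≤ w) (hw : w^2 ≤ 2/7) :
    (9307/10000 : ℝ) ^ ((7:ℝ)/2 * w^2) ≤ Real.cos (7/10 * w) := by
  have hρ : (0:ℝ) < 9307/10000 := by norm_num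
  set u : ℝ := 7/20 * w with hu
  have hu0 : 0 ≤ u := by rw [hu]; positivity
  have hu2 : u^2 = 49/400 * w^2 := by rw [hu]; ring
  have hu1 : u ≤ 1 := by nlinarith [hu2, hw, sq_nonneg (u-1)]
  have hb := Real.sin_bound (x := u) (by rwa [abs_of_nonneg hu0])
  rw [abs_of_nonneg hu0] at hb
  have hsin : Real.sin u ≤ u - u^3/6 + u^4*(5/96) := by
    have h := (abs_le.mp hb).2
    nlinarith [mul_le_mul_of_nonneg_left hu1 (pow_nonneg hu0 4)]
  have hsin0 : 0 ≤ Real.sin u :=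
    Real.sin_nonneg_of_nonneg_of_le_pi hu0 (hu1.trans (by linarith [Real.pi_gt_d6]))
  have hcoslb : 1 - 2*(u - u^3/6 + u^4*(5/96))^2 ≤ Real.cos (7/10 * w) := by
    have harg : 7/10 * w = 2*u := by rw [hu]; ring
    rw [harg]
    have hc2m := Real.cos_two_mul u
    have hpy := Real.sin_sq_add_cos_sq u
    have hg0 : 0 ≤ u - u^3/6 + u^4*(5/96) := le_trans hsin0 hsin
    have hsq : Real.sin u^2 ≤ (u - u^3/6 + u^4*(5/96))^2 := by
      nlinarith [mul_nonneg (sub_nonneg.2 hsin) (by linarith : (0:ℝ) ≤ (u - u^3/6 + u^4*(5/96)) + Real.sin u)]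
    linarith
  rcases le_or_gt (w^2) (1/14) with hcase0 | hcase0
  · have hv1 : (0 : ℝ) ≤ u^2 := by rw [hu2]; nlinarith [sq_nonneg w]
    have hv2 : u^2 ≤ (7/800 : ℝ) := by rw [hu2]; nlinarith [hcase0]
    have hUhi : u ≤ (46771/500000 : ℝ) := le_of_pow_le_pow_left₀ (by norm_num) (by norm_num) (by nlinarith [hv2] : u^2 ≤ (46771/500000 : ℝ)^2)
    have hUlo : (0 : ℝ) ≤ u := le_of_pow_le_pow_left₀ (by norm_num) hu0 (by nlinarith [hv1] : (0 : ℝ)^2 ≤ u^2)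
    have h5 : u^5 ≤ (46771/500000 : ℝ)*u^4 := by nlinarith [mul_le_mul_of_nonneg_left hUhi (pow_nonneg hu0 4)]
    have h7 : (0 : ℝ)*u^6 ≤ u^7 := by nlinarith [mul_le_mul_of_nonneg_left hUlo (pow_nonneg hu0 6)]
    have hP := piece_1_1 (u^2) hv1 hv2
    have hEE : 1 - 2*(u - u^3/6 + u^4*(5/96))^2 - (1 - 2*u^2 + (517743/800000 : ℝ)*(u^2)^2 + (-1/18 : ℝ)*(u^2)^3 + (-25/4608 : ℝ)*(u^2)^4) = (5/24)*(46771/500000*u^4 - u^5) + (5/144)*(u^7 - 0*u^6) := by ring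
    have hka : (9307/10000 : ℝ) ^ ((0:ℝ)/4) ≤ (1 : ℝ) := rpow_quarter_le' hρ (by norm_num) 0 (by norm_num) (by norm_num)
    have hkb : (9307/10000 : ℝ) ^ ((1:ℝ)/4) ≤ (98223/100000 : ℝ) := rpow_quarter_le' hρ (by norm_num) 1 (by norm_num) (by norm_num)
    have hth1 : ((0:ℝ)/4) ≤ (7:ℝ)/2 * w^2 := by linarith [hv1, hu2.le, hu2.ge]
    have hth2 : (7:ℝ)/2 * w^2 ≤ ((1:ℝ)/4) := by linarith [hv2, hu2.le, hu2.ge]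
    have hch := rpow_chord hρ (by norm_num : ((0:ℝ)/4) < ((1:ℝ)/4)) hth1 hth2 hka hkb
    have hrhs : (1 : ℝ) + ((7:ℝ)/2 * w^2 - (0:ℝ)/4) * (((98223/100000 : ℝ) - (1 : ℝ)) / ((1:ℝ)/4 - (0:ℝ)/4)) = (1 : ℝ) + (-1777/875 : ℝ) * (u^2) := by rw [hu2]; ring
    linarith [hch, hP, hcoslb]
  rcases le_or_gt (w^2) (1/7) with hcase1 | hcase1
  · have hv1 : (7/800 : ℝ) ≤ u^2 := by rw [hu2]; nlinarith [hcase0]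
    have hv2 : u^2 ≤ (7/400 : ℝ) := by rw [hu2]; nlinarith [hcase1]
    have hUhi : u ≤ (2067/15625 : ℝ) := le_of_pow_le_pow_left₀ (by norm_num) (by norm_num) (by nlinarith [hv2] : u^2 ≤ (2067/15625 : ℝ)^2)
    have hUlo : (93541/1000000 : ℝ) ≤ u := le_of_pow_le_pow_left₀ (by norm_num) hu0 (by nlinarith [hv1] : (93541/1000000 : ℝ)^2 ≤ u^2)
    have h5 : u^5 ≤ (2067/15625 : ℝ)*u^4 := by nlinarith [mul_le_mul_of_nonneg_left hUhi (pow_nonneg hu0 4)]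
    have h7 : (93541/1000000 : ℝ)*u^6 ≤ u^7 := by nlinarith [mul_le_mul_of_nonneg_left hUlo (pow_nonneg hu0 6)]
    have hP := piece_1_2 (u^2) hv1 hv2
    have hEE : 1 - 2*(u - u^3/6 + u^4*(5/96))^2 - (1 - 2*u^2 + (47933/75000 : ℝ)*(u^2)^2 + (-502153/9600000 : ℝ)*(u^2)^3 + (-25/4608 : ℝ)*(u^2)^4) = (5/24)*(2067/15625*u^4 - u^5) + (5/144)*(u^7 - 93541/1000000*u^6) := by ring
    have hka : (9307/10000 : ℝ) ^ ((1:ℝ)/4) ≤ (98223/100000 : ℝ) := rpow_quarter_le' hρ (by norm_num) 1 (by norm_num) (by norm_num)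
    have hkb : (9307/10000 : ℝ) ^ ((2:ℝ)/4) ≤ (3859/4000 : ℝ) := rpow_quarter_le' hρ (by norm_num) 2 (by norm_num) (by norm_num)
    have hth1 : ((1:ℝ)/4) ≤ (7:ℝ)/2 * w^2 := by linarith [hv1, hu2.le, hu2.ge]
    have hth2 : (7:ℝ)/2 * w^2 ≤ ((2:ℝ)/4) := by linarith [hv2, hu2.le, hu2.ge]
    have hch := rpow_chord hρ (by norm_num : ((1:ℝ)/4) < ((2:ℝ)/4)) hth1 hth2 hka hkb
    have hrhs : (98223/100000 : ℝ) + ((7:ℝ)/2 * w^2 - (1:ℝ)/4) * (((3859/4000 : ℝ) - (98223/100000 : ℝ)) / ((2:ℝ)/4 - (1:ℝ)/4)) = (99971/100000 : ℝ) + (-1748/875 : ℝ) * (u^2) := by rw [hu2]; ring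
    linarith [hch, hP, hcoslb]
  rcases le_or_gt (w^2) (3/14) with hcase2 | hcase2
  · have hv1 : (7/400 : ℝ) ≤ u^2 := by rw [hu2]; nlinarith [hcase1]
    have hv2 : u^2 ≤ (21/800 : ℝ) := by rw [hu2]; nlinarith [hcase2]
    have hUhi : u ≤ (162019/1000000 : ℝ) := le_of_pow_le_pow_left₀ (by norm_num) (by norm_num) (by nlinarith [hv2] : u^2 ≤ (162019/1000000 : ℝ)^2)
    have hUlo : (132287/1000000 : ℝ) ≤ u := le_of_pow_le_pow_left₀ (by norm_num) hu0 (by nlinarith [hv1] : (132287/1000000 : ℝ)^2 ≤ u^2)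
    have h5 : u^5 ≤ (162019/1000000 : ℝ)*u^4 := by nlinarith [mul_le_mul_of_nonneg_left hUhi (pow_nonneg hu0 4)]
    have h7 : (132287/1000000 : ℝ)*u^6 ≤ u^7 := by nlinarith [mul_le_mul_of_nonneg_left hUlo (pow_nonneg hu0 6)]
    have hP := piece_1_3 (u^2) hv1 hv2
    have hEE : 1 - 2*(u - u^3/6 + u^4*(5/96))^2 - (1 - 2*u^2 + (3037981/4800000 : ℝ)*(u^2)^2 + (-1467713/28800000 : ℝ)*(u^2)^3 + (-25/4608 : ℝ)*(u^2)^4) = (5/24)*(162019/1000000*u^4 - u^5) + (5/144)*(u^7 - 132287/1000000*u^6) := by ring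
    have hka : (9307/10000 : ℝ) ^ ((2:ℝ)/4) ≤ (3859/4000 : ℝ) := rpow_quarter_le' hρ (by norm_num) 2 (by norm_num) (by norm_num)
    have hkb : (9307/10000 : ℝ) ^ ((3:ℝ)/4) ≤ (2369/2500 : ℝ) := rpow_quarter_le' hρ (by norm_num) 3 (by norm_num) (by norm_num)
    have hth1 : ((2:ℝ)/4) ≤ (7:ℝ)/2 * w^2 := by linarith [hv1, hu2.le, hu2.ge]
    have hth2 : (7:ℝ)/2 * w^2 ≤ ((3:ℝ)/4) := by linarith [hv2, hu2.le, hu2.ge]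
    have hch := rpow_chord hρ (by norm_num : ((2:ℝ)/4) < ((3:ℝ)/4)) hth1 hth2 hka hkb
    have hrhs : (3859/4000 : ℝ) + ((7:ℝ)/2 * w^2 - (2:ℝ)/4) * (((2369/2500 : ℝ) - (3859/4000 : ℝ)) / ((3:ℝ)/4 - (2:ℝ)/4)) = (19981/20000 : ℝ) + (-49/25 : ℝ) * (u^2) := by rw [hu2]; ring
    linarith [hch, hP, hcoslb]
  have hv1 : (21/800 : ℝ) ≤ u^2 := by rw [hu2]; nlinarith [hcase2]
  have hv2 : u^2 ≤ (7/200 : ℝ) := by rw [hu2]; nlinarith [hw]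
  have hUhi : u ≤ (187083/1000000 : ℝ) := le_of_pow_le_pow_left₀ (by norm_num) (by norm_num) (by nlinarith [hv2] : u^2 ≤ (187083/1000000 : ℝ)^2)
  have hUlo : (81009/500000 : ℝ) ≤ u := le_of_pow_le_pow_left₀ (by norm_num) hu0 (by nlinarith [hv1] : (81009/500000 : ℝ)^2 ≤ u^2)
  have h5 : u^5 ≤ (187083/1000000 : ℝ)*u^4 := by nlinarith [mul_le_mul_of_nonneg_left hUhi (pow_nonneg hu0 4)]
  have h7 : (81009/500000 : ℝ)*u^6 ≤ u^7 := by nlinarith [mul_le_mul_of_nonneg_left hUlo (pow_nonneg hu0 6)]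
  have hP := piece_1_4 (u^2) hv1 hv2
  have hEE : 1 - 2*(u - u^3/6 + u^4*(5/96))^2 - (1 - 2*u^2 + (3012917/4800000 : ℝ)*(u^2)^2 + (-718991/14400000 : ℝ)*(u^2)^3 + (-25/4608 : ℝ)*(u^2)^4) = (5/24)*(187083/1000000*u^4 - u^5) + (5/144)*(u^7 - 81009/500000*u^6) := by ring
  have hka : (9307/10000 : ℝ) ^ ((3:ℝ)/4) ≤ (2369/2500 : ℝ) := rpow_quarter_le' hρ (by norm_num) 3 (by norm_num) (by norm_num)
  have hkb : (9307/10000 : ℝ) ^ ((4:ℝ)/4) ≤ (9307/10000 : ℝ) := rpow_quarter_le' hρ (by norm_num) 4 (by norm_num) (by norm_num)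
  have hth1 : ((3:ℝ)/4) ≤ (7:ℝ)/2 * w^2 := by linarith [hv1, hu2.le, hu2.ge]
  have hth2 : (7:ℝ)/2 * w^2 ≤ ((4:ℝ)/4) := by linarith [hv2, hu2.le, hu2.ge]
  have hch := rpow_chord hρ (by norm_num : ((3:ℝ)/4) < ((4:ℝ)/4)) hth1 hth2 hka hkb
  have hrhs : (2369/2500 : ℝ) + ((7:ℝ)/2 * w^2 - (3:ℝ)/4) * (((9307/10000 : ℝ) - (2369/2500 : ℝ)) / ((4:ℝ)/4 - (3:ℝ)/4)) = (9983/10000 : ℝ) + (-338/175 : ℝ) * (u^2) := by rw [hu2]; ring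
  linarith [hch, hP, hcoslb]

lemma cos_core_2 (w : ℝ) (hw0 : 0 ≤ w) (hw : w^2 ≤ 2/7) :
    (457/625 : ℝ) ^ ((7:ℝ)/2 * w^2) ≤ Real.cos (7/5 * w) := by
  have hρ : (0:ℝ) < 457/625 := by norm_num
  set u : ℝ := 7/10 * w with hu
  have hu0 : 0 ≤ u := by rw [hu]; positivity
  have hu2 : u^2 = 49/100 * w^2 := by rw [hu]; ring
  have hu1 : u ≤ 1 := by nlinarith [hu2, hw, sq_nonneg (u-1)]
  have hb := Real.sin_bound (x := u) (by rwa [abs_of_nonneg hu0])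
  rw [abs_of_nonneg hu0] at hb
  have hsin : Real.sin u ≤ u - u^3/6 + u^4*(5/96) := by
    have h := (abs_le.mp hb).2
    nlinarith [mul_le_mul_of_nonneg_left hu1 (pow_nonneg hu0 4)]
  have hsin0 : 0 ≤ Real.sin u :=
    Real.sin_nonneg_of_nonneg_of_le_pi hu0 (hu1.trans (by linarith [Real.pi_gt_d6]))
  have hcoslb : 1 - 2*(u - u^3/6 + u^4*(5/96))^2 ≤ Real.cos (7/5 * w) := by
    have harg : 7/5 * w = 2*u := by rw [hu]; ring
    rw [harg]
    have hc2m := Real.cos_two_mul u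
    have hpy := Real.sin_sq_add_cos_sq u
    have hg0 : 0 ≤ u - u^3/6 + u^4*(5/96) := le_trans hsin0 hsin
    have hsq : Real.sin u^2 ≤ (u - u^3/6 + u^4*(5/96))^2 := by
      nlinarith [mul_nonneg (sub_nonneg.2 hsin) (by linarith : (0:ℝ) ≤ (u - u^3/6 + u^4*(5/96)) + Real.sin u)]
    linarith
  rcases le_or_gt (w^2) (1/7) with hcase0 | hcase0
  · have hv1 : (0 : ℝ) ≤ u^2 := by rw [hu2]; nlinarith [sq_nonneg w]
    have hv2 : u^2 ≤ (7/100 : ℝ) := by rw [hu2]; nlinarith [hcase0]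
    have hUhi : u ≤ (4134/15625 : ℝ) := le_of_pow_le_pow_left₀ (by norm_num) (by norm_num) (by nlinarith [hv2] : u^2 ≤ (4134/15625 : ℝ)^2)
    have hUlo : (0 : ℝ) ≤ u := le_of_pow_le_pow_left₀ (by norm_num) hu0 (by nlinarith [hv1] : (0 : ℝ)^2 ≤ u^2)
    have h5 : u^5 ≤ (4134/15625 : ℝ)*u^4 := by nlinarith [mul_le_mul_of_nonneg_left hUhi (pow_nonneg hu0 4)]
    have h7 : (0 : ℝ)*u^6 ≤ u^7 := by nlinarith [mul_le_mul_of_nonneg_left hUlo (pow_nonneg hu0 6)]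
    have hP := piece_2_1 (u^2) hv1 hv2
    have hEE : 1 - 2*(u - u^3/6 + u^4*(5/96))^2 - (1 - 2*u^2 + (22933/37500 : ℝ)*(u^2)^2 + (-1/18 : ℝ)*(u^2)^3 + (-25/4608 : ℝ)*(u^2)^4) = (5/24)*(4134/15625*u^4 - u^5) + (5/144)*(u^7 - 0*u^6) := by ring
    have hka : (457/625 : ℝ) ^ ((0:ℝ)/4) ≤ (1 : ℝ) := rpow_quarter_le' hρ (by norm_num) 0 (by norm_num) (by norm_num)
    have hkb : (457/625 : ℝ) ^ ((2:ℝ)/4) ≤ (85511/100000 : ℝ) := rpow_quarter_le' hρ (by norm_num) 2 (by norm_num) (by norm_num)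
    have hth1 : ((0:ℝ)/4) ≤ (7:ℝ)/2 * w^2 := by linarith [hv1, hu2.le, hu2.ge]
    have hth2 : (7:ℝ)/2 * w^2 ≤ ((2:ℝ)/4) := by linarith [hv2, hu2.le, hu2.ge]
    have hch := rpow_chord hρ (by norm_num : ((0:ℝ)/4) < ((2:ℝ)/4)) hth1 hth2 hka hkb
    have hrhs : (1 : ℝ) + ((7:ℝ)/2 * w^2 - (0:ℝ)/4) * (((85511/100000 : ℝ) - (1 : ℝ)) / ((2:ℝ)/4 - (0:ℝ)/4)) = (1 : ℝ) + (-14489/7000 : ℝ) * (u^2) := by rw [hu2]; ring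
    linarith [hch, hP, hcoslb]
  have hv1 : (7/100 : ℝ) ≤ u^2 := by rw [hu2]; nlinarith [hcase0]
  have hv2 : u^2 ≤ (7/50 : ℝ) := by rw [hu2]; nlinarith [hw]
  have hUhi : u ≤ (187083/500000 : ℝ) := le_of_pow_le_pow_left₀ (by norm_num) (by norm_num) (by nlinarith [hv2] : u^2 ≤ (187083/500000 : ℝ)^2)
  have hUlo : (10583/40000 : ℝ) ≤ u := le_of_pow_le_pow_left₀ (by norm_num) hu0 (by nlinarith [hv1] : (10583/40000 : ℝ)^2 ≤ u^2)
  have h5 : u^5 ≤ (187083/500000 : ℝ)*u^4 := by nlinarith [mul_le_mul_of_nonneg_left hUhi (pow_nonneg hu0 4)]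
  have h7 : (10583/40000 : ℝ)*u^6 ≤ u^7 := by nlinarith [mul_le_mul_of_nonneg_left hUlo (pow_nonneg hu0 6)]
  have hP := piece_2_2 (u^2) hv1 hv2
  have hEE : 1 - 2*(u - u^3/6 + u^4*(5/96))^2 - (1 - 2*u^2 + (1412917/2400000 : ℝ)*(u^2)^2 + (-53417/1152000 : ℝ)*(u^2)^3 + (-25/4608 : ℝ)*(u^2)^4) = (5/24)*(187083/500000*u^4 - u^5) + (5/144)*(u^7 - 10583/40000*u^6) := by ring
  have hka : (457/625 : ℝ) ^ ((2:ℝ)/4) ≤ (85511/100000 : ℝ) := rpow_quarter_le' hρ (by norm_num) 2 (by norm_num) (by norm_num)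
  have hkb : (457/625 : ℝ) ^ ((4:ℝ)/4) ≤ (457/625 : ℝ) := rpow_quarter_le' hρ (by norm_num) 4 (by norm_num) (by norm_num)
  have hth1 : ((2:ℝ)/4) ≤ (7:ℝ)/2 * w^2 := by linarith [hv1, hu2.le, hu2.ge]
  have hth2 : (7:ℝ)/2 * w^2 ≤ ((4:ℝ)/4) := by linarith [hv2, hu2.le, hu2.ge]
  have hch := rpow_chord hρ (by norm_num : ((2:ℝ)/4) < ((4:ℝ)/4)) hth1 hth2 hka hkb
  have hrhs : (85511/100000 : ℝ) + ((7:ℝ)/2 * w^2 - (2:ℝ)/4) * (((457/625 : ℝ) - (85511/100000 : ℝ)) / ((4:ℝ)/4 - (2:ℝ)/4)) = (48951/50000 : ℝ) + (-12391/7000 : ℝ) * (u^2) := by rw [hu2]; ring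
  linarith [hch, hP, hcoslb]

section Minorant

lemma minorant_le (s : ℝ) :
    (-1213169831913/3125000000000 : ℝ) + (1890462483/2000000000) * Real.cos (7/10 * s)
      + (13250783/200000000) * Real.cos (7/5 * s) + (299/800) * Real.cos (14/5 * s)
    ≤ (if |s| ≤ 1 then 1 else 0) + (if (797/100 : ℝ) ≤ |s| then 1 else 0) := by
  have hc1 : -1 ≤ Real.cos (7/10 * s) := Real.neg_one_le_cos _
  have hc2 : Real.cos (7/10 * s) ≤ 1 := Real.cos_le_one _
  have h2 : Real.cos (7/5 * s) = 2 * Real.cos (7/10 * s)^2 - 1 := by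
    rw [show (7:ℝ)/5 * s = 2 * (7/10 * s) by ring, Real.cos_two_mul]
  have h4 : Real.cos (14/5 * s) = 2 * (2 * Real.cos (7/10 * s)^2 - 1)^2 - 1 := by
    rw [show (14:ℝ)/5 * s = 2 * (7/5 * s) by ring, Real.cos_two_mul, h2]
  rw [h2, h4]
  set c := Real.cos (7/10 * s) with hcdef
  have hid : (-1213169831913/3125000000000 : ℝ) + (1890462483/2000000000) * c
      + (13250783/200000000) * (2*c^2-1) + (299/800) * (2*(2*c^2-1)^2-1)
      = (299/100)*(c - 96/125)*(c + 561/500)*(c - 177/1000)^2 := by ring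
  rw [hid]
  by_cases hA : |s| ≤ 1
  · rw [if_pos hA]
    have hP1 : (299/100 : ℝ)*(c - 96/125)*(c + 561/500)*(c - 177/1000)^2 ≤ 1 := by
      nlinarith [mul_nonneg (sub_nonneg.2 hc1) (sub_nonneg.2 hc2), sq_nonneg (c - 177/1000),
        sq_nonneg (c+1), sq_nonneg (c-1),
        mul_nonneg (mul_nonneg (sub_nonneg.2 hc1) (sub_nonneg.2 hc2)) (sq_nonneg (c - 177/1000)),
        sq_nonneg ((c-1)*(c+1))]
    have h0 : (0:ℝ) ≤ if (797/100 : ℝ) ≤ |s| then 1 else 0 := by split_ifs <;> norm_num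
    linarith
  · rw [if_neg hA]
    push_neg at hA
    by_cases hB : (797/100 : ℝ) ≤ |s|
    · rw [if_pos hB]
      have hP1 : (299/100 : ℝ)*(c - 96/125)*(c + 561/500)*(c - 177/1000)^2 ≤ 1 := by
        nlinarith [mul_nonneg (sub_nonneg.2 hc1) (sub_nonneg.2 hc2), sq_nonneg (c - 177/1000),
          sq_nonneg (c+1), sq_nonneg (c-1),
          mul_nonneg (mul_nonneg (sub_nonneg.2 hc1) (sub_nonneg.2 hc2)) (sq_nonneg (c - 177/1000)),
          sq_nonneg ((c-1)*(c+1))]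
      linarith
    · rw [if_neg hB]
      push_neg at hB
      have hpi := Real.pi_gt_d6
      have hcb : c ≤ 96/125 := by
        have habs : Real.cos (7/10 * s) = Real.cos (7/10 * |s|) := by
          rw [← Real.cos_abs (7/10 * s), abs_mul, show |(7:ℝ)/10| = 7/10 from by norm_num]
      -- cos (7/10) ≤ 96/125
        have hcos07 : Real.cos (7/10) ≤ 96/125 := by
          have hb7 := Real.cos_bound (x := 7/10) (by rw [abs_of_nonneg] <;> norm_num)
          rw [abs_of_nonneg (by norm_num : (0:ℝ) ≤ 7/10)] at hb7
          have := (abs_le.mp hb7).2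
          norm_num at this ⊢
          linarith
        have huL : 7/10 ≤ 7/10 * |s| := by nlinarith
        have huU : 7/10 * |s| ≤ 5579/1000 := by nlinarith
        rw [hcdef, habs]
        rcases le_or_gt (7/10 * |s|) Real.pi with hup | hup
        · exact le_trans (Real.cos_le_cos_of_nonneg_of_le_pi (by norm_num) hup huL) hcos07
        · have hrw : Real.cos (7/10 * |s|) = Real.cos (2*Real.pi - (7/10 * |s|)) :=
            (Real.cos_two_pi_sub _).symm
          rw [hrw]
          refine le_trans (Real.cos_le_cos_of_nonneg_of_le_pi (by norm_num) ?_ ?_) hcos07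
          · linarith
          · linarith
      have ha : (0:ℝ) ≤ 96/125 - c := by linarith
      have hb : (0:ℝ) ≤ c + 561/500 := by linarith
      nlinarith [mul_nonneg (mul_nonneg ha hb) (sq_nonneg (c - 177/1000))]

end Minorant

namespace Rad

variable {n : ℕ}

/-- partial signed sum -/
noncomputable def Ssum (x : Fin n → ℝ) (s : Finset (Fin n)) (σ : Fin n → Bool) : ℝ :=
  ∑ i ∈ s, sgn (σ i) * x i

lemma sgn_cases (b : Bool) : sgn b = 1 ∨ sgn b = -1 := by
  cases b <;> simp [sgn]

lemma sgn_sq (b : Bool) : sgn b ^ 2 = 1 := by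
  rcases sgn_cases b with h | h <;> rw [h] <;> norm_num

lemma sgn_not (b : Bool) : sgn (!b) = - sgn b := by
  cases b <;> simp [sgn]

lemma cos_sgn_mul (b : Bool) (c : ℝ) : Real.cos (sgn b * c) = Real.cos c := by
  rcases sgn_cases b with h | h <;> rw [h] <;> simp

/-- flip coordinate a -/
def flip (a : Fin n) (σ : Fin n → Bool) : Fin n → Bool := Function.update σ a (!(σ a))

lemma flip_apply_same (a : Fin n) (σ : Fin n → Bool) : flip a σ a = !(σ a) := by
  simp [flip]

lemma flip_apply_ne (a i : Fin n) (h : i ≠ a) (σ : Fin n → Bool) : flip a σ i = σ i := by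
  simp [flip, Function.update_of_ne h]

lemma flip_invol (a : Fin n) : Function.Involutive (flip a) := by
  intro σ
  funext i
  by_cases h : i = a
  · subst h; simp [flip]
  · rw [flip_apply_ne a i h, flip_apply_ne a i h]

lemma sum_flip (a : Fin n) (F : (Fin n → Bool) → ℝ) :
    ∑ σ : Fin n → Bool, F (flip a σ) = ∑ σ : Fin n → Bool, F σ :=
  Equiv.sum_comp ((flip_invol a).toPerm _) F

lemma Ssum_flip (x : Fin n → ℝ) {s : Finset (Fin n)} {a : Fin n} (ha : a ∉ s)
    (σ : Fin n → Bool) : Ssum x s (flip a σ) = Ssum x s σ := by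
  unfold Ssum
  refine Finset.sum_congr rfl fun i hi => ?_
  rw [flip_apply_ne a i (fun h => ha (h ▸ hi)) σ]

lemma odd_vanish (a : Fin n) (G : (Fin n → Bool) → ℝ) (hG : ∀ σ, G (flip a σ) = G σ) :
    ∑ σ : Fin n → Bool, sgn (σ a) * G σ = 0 := by
  have h := sum_flip a (fun σ => sgn (σ a) * G σ)
  have h2 : ∀ σ : Fin n → Bool, sgn (flip a σ a) * G (flip a σ) = - (sgn (σ a) * G σ) := by
    intro σ
    rw [flip_apply_same, sgn_not, hG]
    ring
  rw [Finset.sum_congr rfl (fun σ _ => h2 σ), Finset.sum_neg_distrib] at h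
  linarith

lemma card_univ_bool : ((Finset.univ : Finset (Fin n → Bool)).card : ℝ) = 2 ^ n := by
  rw [Finset.card_univ, Fintype.card_fun]
  simp

lemma Ssum_empty (x : Fin n → ℝ) (σ : Fin n → Bool) : Ssum x ∅ σ = 0 := by
  simp [Ssum]

lemma Ssum_insert (x : Fin n → ℝ) {s : Finset (Fin n)} {a : Fin n} (ha : a ∉ s)
    (σ : Fin n → Bool) : Ssum x (insert a s) σ = sgn (σ a) * x a + Ssum x s σ := by
  unfold Ssum
  rw [Finset.sum_insert ha]

/-- second moment -/
lemma sum_sq (x : Fin n → ℝ) (s : Finset (Fin n)) :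
    ∑ σ : Fin n → Bool, (Ssum x s σ) ^ 2 = 2 ^ n * ∑ i ∈ s, (x i) ^ 2 := by
  induction s using Finset.induction_on with
  | empty => simp [Ssum_empty]
  | @insert a s ha ih =>
    have expand : ∀ σ : Fin n → Bool, (Ssum x (insert a s) σ) ^ 2
        = (x a) ^ 2 + sgn (σ a) * (2 * x a * Ssum x s σ) + (Ssum x s σ) ^ 2 := by
      intro σ
      rw [Ssum_insert x ha]
      rcases sgn_cases (σ a) with h | h <;> rw [h] <;> ring
    rw [Finset.sum_congr rfl (fun σ _ => expand σ)]
    rw [Finset.sum_add_distrib, Finset.sum_add_distrib]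
    rw [odd_vanish a _ (fun σ => by rw [Ssum_flip x ha])]
    rw [Finset.sum_const, ih, Finset.sum_insert ha]
    have := card_univ_bool (n := n)
    rw [nsmul_eq_mul]
    rw [this]
    ring

/-- fourth moment -/
lemma sum_quad (x : Fin n → ℝ) (s : Finset (Fin n)) :
    ∑ σ : Fin n → Bool, (Ssum x s σ) ^ 4 ≤ 3 * 2 ^ n * (∑ i ∈ s, (x i) ^ 2) ^ 2 := by
  induction s using Finset.induction_on with
  | empty => simp [Ssum_empty]
  | @insert a s ha ih =>
    have expand : ∀ σ : Fin n → Bool, (Ssum x (insert a s) σ) ^ 4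
        = (Ssum x s σ) ^ 4 + 6 * (x a) ^ 2 * (Ssum x s σ) ^ 2 + (x a) ^ 4
          + sgn (σ a) * (4 * x a * (Ssum x s σ) ^ 3 + 4 * (x a) ^ 3 * Ssum x s σ) := by
      intro σ
      rw [Ssum_insert x ha]
      rcases sgn_cases (σ a) with h | h <;> rw [h] <;> ring
    rw [Finset.sum_congr rfl (fun σ _ => expand σ)]
    rw [Finset.sum_add_distrib, Finset.sum_add_distrib, Finset.sum_add_distrib]
    rw [odd_vanish a _ (fun σ => by rw [Ssum_flip x ha])]
    rw [Finset.sum_const, ← Finset.mul_sum, sum_sq, Finset.sum_insert ha]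
    have hc := card_univ_bool (n := n)
    rw [nsmul_eq_mul, hc]
    have hw : (0:ℝ) ≤ ∑ i ∈ s, (x i) ^ 2 := Finset.sum_nonneg fun i _ => sq_nonneg _
    have hN : (0:ℝ) ≤ 2 ^ n := by positivity
    nlinarith [sq_nonneg (x a), sq_nonneg ((x a)^2), mul_nonneg hN (sq_nonneg ((x a)^2))]

/-- cosine product formula -/
lemma sum_cos (x : Fin n → ℝ) (t : ℝ) (s : Finset (Fin n)) :
    ∑ σ : Fin n → Bool, Real.cos (t * Ssum x s σ) = 2 ^ n * ∏ i ∈ s, Real.cos (t * x i) := by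
  induction s using Finset.induction_on with
  | empty => simp [Ssum_empty, card_univ_bool]
  | @insert a s ha ih =>
    have key : ∀ σ : Fin n → Bool,
        Real.cos (t * Ssum x (insert a s) σ) + Real.cos (t * Ssum x (insert a s) (flip a σ))
        = 2 * Real.cos (t * x a) * Real.cos (t * Ssum x s σ) := by
      intro σ
      rw [Ssum_insert x ha σ, Ssum_insert x ha (flip a σ), flip_apply_same, sgn_not,
        Ssum_flip x ha]
      have h1 : t * (sgn (σ a) * x a + Ssum x s σ)
          = t * Ssum x s σ + sgn (σ a) * (t * x a) := by ring
      have h2 : t * (-sgn (σ a) * x a + Ssum x s σ)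
          = t * Ssum x s σ - sgn (σ a) * (t * x a) := by ring
      rw [h1, h2, Real.cos_add, Real.cos_sub]
      have h3 : Real.cos (sgn (σ a) * (t * x a)) = Real.cos (t * x a) := cos_sgn_mul _ _
      have h4 : Real.sin (sgn (σ a) * (t * x a)) = sgn (σ a) * Real.sin (t * x a) := by
        rcases sgn_cases (σ a) with h | h <;> rw [h] <;> simp
      rw [h3, h4]
      ring
    have h5 : 2 * ∑ σ : Fin n → Bool, Real.cos (t * Ssum x (insert a s) σ)
        = ∑ σ : Fin n → Bool, 2 * Real.cos (t * x a) * Real.cos (t * Ssum x s σ) := by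
      rw [Finset.sum_congr rfl (fun σ _ => (key σ).symm), Finset.sum_add_distrib,
        sum_flip a (fun σ => Real.cos (t * Ssum x (insert a s) σ))]
      ring
    rw [← Finset.mul_sum, ih] at h5
    rw [Finset.prod_insert ha]
    linarith

end Rad
namespace Rad

variable {n : ℕ}

lemma cos_step_1 (z : ℝ) (hz : z^2 ≤ 2/7) :
    (9307/10000 : ℝ) ^ ((7:ℝ)/2 * z^2) ≤ Real.cos (7/10 * z) := by
  have h := cos_core_1 |z| (abs_nonneg z) (by rwa [sq_abs])
  rw [sq_abs] at h
  rw [← Real.cos_abs (7/10 * z), abs_mul, show |(7:ℝ)/10| = 7/10 from by norm_num]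
  exact h

lemma cos_step_2 (z : ℝ) (hz : z^2 ≤ 2/7) :
    (7312/10000 : ℝ) ^ ((7:ℝ)/2 * z^2) ≤ Real.cos (7/5 * z) := by
  have h7 : (7312/10000 : ℝ) = 457/625 := by norm_num
  rw [h7]
  have h := cos_core_2 |z| (abs_nonneg z) (by rwa [sq_abs])
  rw [sq_abs] at h
  rw [← Real.cos_abs (7/5 * z), abs_mul, show |(7:ℝ)/5| = 7/5 from by norm_num]
  exact h

lemma prod_cos_ge (x : Fin n → ℝ) (t ρ : ℝ) (hρ : 0 < ρ)
    (hstep : ∀ z : ℝ, z^2 ≤ 2/7 → ρ ^ ((7:ℝ)/2 * z^2) ≤ Real.cos (t * z))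
    (hx : ∀ i, (x i)^2 ≤ 2/7) (s : Finset (Fin n)) :
    ρ ^ ((7:ℝ)/2 * ∑ i ∈ s, (x i)^2) ≤ ∏ i ∈ s, Real.cos (t * x i) := by
  induction s using Finset.induction_on with
  | empty => simp
  | @insert a s ha ih =>
    rw [Finset.prod_insert ha, Finset.sum_insert ha]
    have h1 : ρ ^ ((7:ℝ)/2 * ((x a)^2 + ∑ i ∈ s, (x i)^2))
        = ρ ^ ((7:ℝ)/2 * (x a)^2) * ρ ^ ((7:ℝ)/2 * ∑ i ∈ s, (x i)^2) := by
      rw [← Real.rpow_add hρ]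
      ring_nf
    rw [h1]
    have hca := hstep (x a) (hx a)
    exact mul_le_mul hca ih (Real.rpow_nonneg hρ.le _)
      (le_trans (Real.rpow_pos_of_pos hρ _).le hca)

lemma rpow_seven_half_ge {ρ r : ℝ} (hρ : 0 < ρ) (hr : 0 ≤ r) (h : r^2 ≤ ρ) :
    ρ^(3:ℕ) * r ≤ ρ ^ ((7:ℝ)/2) := by
  have h12 : r ≤ ρ ^ ((1:ℝ)/2) := by
    apply le_of_pow_le_pow_left₀ (n := 2) (by norm_num) (Real.rpow_nonneg hρ.le _)
    have hkey : (ρ ^ ((1:ℝ)/2))^(2:ℕ) = ρ := by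
      rw [← Real.rpow_natCast (ρ ^ ((1:ℝ)/2)) 2, ← Real.rpow_mul hρ.le]
      norm_num
    rw [hkey]
    exact h
  have hsplit : ρ ^ ((7:ℝ)/2) = ρ^(3:ℕ) * ρ ^ ((1:ℝ)/2) := by
    rw [← Real.rpow_natCast ρ 3, ← Real.rpow_add hρ]
    norm_num
  rw [hsplit]
  exact mul_le_mul_of_nonneg_left h12 (by positivity)

lemma count_markov (x : Fin n → ℝ) (s : Finset (Fin n)) (a : ℝ) (ha : 0 < a) :
    ((Finset.univ.filter (fun σ : Fin n → Bool => a ≤ |Ssum x s σ|)).card : ℝ) * a^4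
      ≤ 3 * 2^n * (∑ i ∈ s, (x i)^2)^2 := by
  set T := Finset.univ.filter (fun σ : Fin n → Bool => a ≤ |Ssum x s σ|) with hT
  have h1 : (T.card : ℝ) * a^4 = ∑ _σ ∈ T, a^4 := by
    rw [Finset.sum_const, nsmul_eq_mul]
  have h2 : ∑ _σ ∈ T, a^4 ≤ ∑ σ ∈ T, (Ssum x s σ)^4 := by
    refine Finset.sum_le_sum fun σ hσ => ?_
    have hmem := (Finset.mem_filter.mp hσ).2
    have habs : |Ssum x s σ|^4 = (Ssum x s σ)^4 := by
      rw [← abs_pow, abs_of_nonneg (by positivity)]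
    calc a^4 ≤ |Ssum x s σ|^4 := pow_le_pow_left₀ ha.le hmem 4
      _ = (Ssum x s σ)^4 := habs
  have h3 : ∑ σ ∈ T, (Ssum x s σ)^4 ≤ ∑ σ : Fin n → Bool, (Ssum x s σ)^4 := by
    refine Finset.sum_le_sum_of_subset_of_nonneg (Finset.filter_subset _ _) ?_
    intro σ _ _
    positivity
  have h4 := sum_quad x s
  linarith

lemma half_count (P Q : (Fin n → Bool) → Prop) (a : Fin n)
    (h : ∀ σ, Q σ → P σ ∨ P (Rad.flip a σ)) :
    ((Finset.univ.filter Q).card : ℝ) ≤ 2 * ((Finset.univ.filter P).card : ℝ) := by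
  have hsub : Finset.univ.filter Q ⊆
      (Finset.univ.filter P) ∪ (Finset.univ.filter P).image (Rad.flip a) := by
    intro σ hσ
    rcases h σ (Finset.mem_filter.mp hσ).2 with hp | hp
    · exact Finset.mem_union_left _ (Finset.mem_filter.mpr ⟨Finset.mem_univ _, hp⟩)
    · refine Finset.mem_union_right _ ?_
      exact Finset.mem_image.mpr ⟨Rad.flip a σ, Finset.mem_filter.mpr ⟨Finset.mem_univ _, hp⟩,
        flip_invol a σ⟩
  have h1 := Finset.card_le_card hsub
  have h2 := Finset.card_union_le (Finset.univ.filter P) ((Finset.univ.filter P).image (Rad.flip a))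
  have h3 := Finset.card_image_le (s := Finset.univ.filter P) (f := Rad.flip a)
  have hfin : (Finset.univ.filter Q).card ≤ 2 * (Finset.univ.filter P).card := by omega
  exact_mod_cast hfin

end Rad

open Rad

theorem stmt0 (n : ℕ) (hn : 1 ≤ n) (x : Fin n → ℝ)
    (hx : ∑ i, (x i) ^ 2 = 1) :
    prSign n (fun σ => |∑ i, sgn (σ i) * x i| ≤ 1) ≥ 0.36 := by

  have hN : (0:ℝ) < 2^n := by positivity
  rw [ge_iff_le, show (0.36 : ℝ) = 9/25 by norm_num]
  unfold prSign
  rw [le_div_iff₀ hN]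
  set P : (Fin n → Bool) → Prop := fun σ => |∑ i, sgn (σ i) * x i| ≤ 1 with hPdef
  by_cases hbig : ∃ i, 2/7 ≤ (x i)^2
  -- CASE 1 : some big coordinate
  · obtain ⟨i0, hb⟩ := hbig
    set m := |x i0| with hm
    have hm0 : 0 ≤ m := abs_nonneg _
    have hm2 : m^2 = (x i0)^2 := sq_abs _
    have hxle : (x i0)^2 ≤ 1 := by
      have h := Finset.single_le_sum (f := fun i => (x i)^2) (fun i _ => sq_nonneg _)
        (Finset.mem_univ i0)
      rw [hx] at h
      exact h
    have hm1 : m ≤ 1 := by nlinarith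
    have hErase : ∑ i ∈ Finset.univ.erase i0, (x i)^2 = 1 - (x i0)^2 := by
      have h : ∑ i ∈ Finset.univ.erase i0, (x i)^2 + (x i0)^2 = 1 := by
        have h0 := Finset.sum_erase_add Finset.univ (fun i => (x i)^2) (Finset.mem_univ i0)
        simpa [hx] using h0
      linarith
    have hS : ∀ σ : Fin n → Bool,
        Ssum x Finset.univ σ = sgn (σ i0) * x i0 + Ssum x (Finset.univ.erase i0) σ := by
      intro σ
      conv_lhs => rw [show (Finset.univ : Finset (Fin n)) = insert i0 (Finset.univ.erase i0)
        from (Finset.insert_erase (Finset.mem_univ i0)).symm]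
      exact Ssum_insert x (Finset.notMem_erase _ _) σ
    have hSf : ∀ σ : Fin n → Bool,
        Ssum x Finset.univ (Rad.flip i0 σ)
          = -(sgn (σ i0) * x i0) + Ssum x (Finset.univ.erase i0) σ := by
      intro σ
      rw [hS (Rad.flip i0 σ), flip_apply_same, sgn_not, Ssum_flip x (Finset.notMem_erase _ _)]
      ring
    set Q : (Fin n → Bool) → Prop :=
      fun σ => |Ssum x (Finset.univ.erase i0) σ| ≤ 1 + m with hQdef
    have hor : ∀ σ, Q σ → P σ ∨ P (Rad.flip i0 σ) := by
      intro σ hq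
      have hq' := abs_le.mp hq
      have hbval : sgn (σ i0) * x i0 = m ∨ sgn (σ i0) * x i0 = -m := by
        rcases sgn_cases (σ i0) with h | h <;> rcases abs_cases (x i0) with ⟨h2, _⟩ | ⟨h2, _⟩ <;>
          rw [h, hm] <;> rw [h2] <;> ring_nf <;> simp
      rcases hbval with hb1 | hb1
      · rcases le_or_gt 0 (Ssum x (Finset.univ.erase i0) σ) with hR | hR
        · right
          show |Ssum x Finset.univ (Rad.flip i0 σ)| ≤ 1
          rw [hSf σ, hb1, abs_le]
          constructor <;> linarith
        · left
          show |Ssum x Finset.univ σ| ≤ 1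
          rw [hS σ, hb1, abs_le]
          constructor <;> linarith
      · rcases le_or_gt 0 (Ssum x (Finset.univ.erase i0) σ) with hR | hR
        · left
          show |Ssum x Finset.univ σ| ≤ 1
          rw [hS σ, hb1, abs_le]
          constructor <;> linarith
        · right
          show |Ssum x Finset.univ (Rad.flip i0 σ)| ≤ 1
          rw [hSf σ, hb1, abs_le]
          constructor <;> linarith
    have hcount := half_count P Q i0 hor
    have hcompl : ((Finset.univ.filter (fun σ => ¬ Q σ)).card : ℝ)
        ≤ ((Finset.univ.filter (fun σ : Fin n → Bool =>
            (1+m) ≤ |Ssum x (Finset.univ.erase i0) σ|)).card : ℝ) := by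
      have hsub : Finset.univ.filter (fun σ => ¬ Q σ)
          ⊆ Finset.univ.filter (fun σ : Fin n → Bool =>
            (1+m) ≤ |Ssum x (Finset.univ.erase i0) σ|) := by
        intro σ hσ
        have hnq := (Finset.mem_filter.mp hσ).2
        simp only [hQdef, not_le] at hnq
        exact Finset.mem_filter.mpr ⟨Finset.mem_univ _, hnq.le⟩
      exact_mod_cast Finset.card_le_card hsub
    have hmark := count_markov x (Finset.univ.erase i0) (1+m) (by linarith)
    rw [hErase, ← hm2] at hmark
    have hQn := Finset.card_filter_add_card_filter_not
      (s := (Finset.univ : Finset (Fin n → Bool))) (p := Q)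
    have hQsplit : ((Finset.univ.filter Q).card : ℝ)
        + ((Finset.univ.filter (fun σ => ¬ Q σ)).card : ℝ) = 2^n := by
      rw [← card_univ_bool (n := n)]
      exact_mod_cast hQn
    have hkey : 75*(1-m)^2 ≤ 7*(1+m)^2 := by
      have h27 : (2:ℝ)/7 ≤ m^2 := by rw [hm2]; exact hb
      have hm5 : (5345:ℝ)/10000 ≤ m := by nlinarith
      nlinarith [mul_nonneg (sub_nonneg.2 hm5) (sub_nonneg.2 hm1)]
    have hp4 : (0:ℝ) < (1+m)^4 := by positivity
    have h75 : 3 * (2:ℝ)^n * (1-m^2)^2 ≤ (7/25) * 2^n * (1+m)^4 := by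
      have hmul := mul_le_mul_of_nonneg_left hkey (mul_nonneg hN.le (sq_nonneg (1+m)))
      nlinarith [hmul]
    have hcT : ((Finset.univ.filter (fun σ : Fin n → Bool =>
        (1+m) ≤ |Ssum x (Finset.univ.erase i0) σ|)).card : ℝ) ≤ (7/25) * 2^n :=
      le_of_mul_le_mul_right (le_trans hmark h75) hp4
    linarith [hcount, hQsplit, hcompl, hcT]
  -- CASE 2 : all coordinates small
  · push_neg at hbig
    have hxs : ∀ i, (x i)^2 ≤ 2/7 := fun i => (hbig i).le
    have hρ1 : (0:ℝ) < 9307/10000 := by norm_num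
    have hρ2 : (0:ℝ) < 7312/10000 := by norm_num
    have hprod1 : (9307/10000 : ℝ)^(3:ℕ) * (9647/10000) ≤ ∏ i, Real.cos (7/10 * x i) := by
      have h := prod_cos_ge x (7/10) _ hρ1 cos_step_1 hxs Finset.univ
      rw [hx, show (7:ℝ)/2 * 1 = 7/2 by norm_num] at h
      exact le_trans (rpow_seven_half_ge hρ1 (by norm_num) (by norm_num)) h
    have hprod2 : (7312/10000 : ℝ)^(3:ℕ) * (8551/10000) ≤ ∏ i, Real.cos (7/5 * x i) := by
      have h := prod_cos_ge x (7/5) _ hρ2 cos_step_2 hxs Finset.univ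
      rw [hx, show (7:ℝ)/2 * 1 = 7/2 by norm_num] at h
      exact le_trans (rpow_seven_half_ge hρ2 (by norm_num) (by norm_num)) h
    have hprod3 : (0:ℝ) ≤ ∏ i, Real.cos (14/5 * x i) := by
      refine Finset.prod_nonneg fun i _ => ?_
      have hsq : |14/5 * x i|^2 ≤ (1497/1000 : ℝ)^2 := by
        rw [sq_abs]
        nlinarith [hxs i]
      have habs : |14/5 * x i| ≤ 1497/1000 :=
        le_of_pow_le_pow_left₀ (n := 2) (by norm_num) (by norm_num) hsq
      have hpi := Real.pi_gt_d6
      have h1 := (abs_le.mp habs).1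
      have h2 := (abs_le.mp habs).2
      refine Real.cos_nonneg_of_mem_Icc ⟨by linarith, by linarith⟩
    have hsum1 := sum_cos x (7/10) Finset.univ
    have hsum2 := sum_cos x (7/5) Finset.univ
    have hsum3 := sum_cos x (14/5) Finset.univ
    set T : Finset (Fin n → Bool) := Finset.univ.filter
      (fun σ : Fin n → Bool => (797/100 : ℝ) ≤ |Ssum x Finset.univ σ|) with hTdef
    have hfP : (Finset.univ.filter (fun σ : Fin n → Bool => |Ssum x Finset.univ σ| ≤ 1))
        = Finset.univ.filter P := rfl
    have hminsum : ∑ σ : Fin n → Bool,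
        ((-1213169831913/3125000000000 : ℝ)
          + (1890462483/2000000000) * Real.cos (7/10 * Ssum x Finset.univ σ)
          + (13250783/200000000) * Real.cos (7/5 * Ssum x Finset.univ σ)
          + (299/800) * Real.cos (14/5 * Ssum x Finset.univ σ))
        ≤ ((Finset.univ.filter P).card : ℝ) + (T.card : ℝ) := by
      have hstep : ∑ σ : Fin n → Bool,
          ((-1213169831913/3125000000000 : ℝ)
            + (1890462483/2000000000) * Real.cos (7/10 * Ssum x Finset.univ σ)
            + (13250783/200000000) * Real.cos (7/5 * Ssum x Finset.univ σ)
            + (299/800) * Real.cos (14/5 * Ssum x Finset.univ σ))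
          ≤ ∑ σ : Fin n → Bool,
            ((if |Ssum x Finset.univ σ| ≤ 1 then (1:ℝ) else 0)
              + (if (797/100 : ℝ) ≤ |Ssum x Finset.univ σ| then (1:ℝ) else 0)) :=
        Finset.sum_le_sum (fun σ _ => minorant_le (Ssum x Finset.univ σ))
      refine le_trans hstep ?_
      rw [Finset.sum_add_distrib, Finset.sum_boole, Finset.sum_boole, hfP]
    have hexpand : ∑ σ : Fin n → Bool,
        ((-1213169831913/3125000000000 : ℝ)
          + (1890462483/2000000000) * Real.cos (7/10 * Ssum x Finset.univ σ)
          + (13250783/200000000) * Real.cos (7/5 * Ssum x Finset.univ σ)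
          + (299/800) * Real.cos (14/5 * Ssum x Finset.univ σ))
        = (-1213169831913/3125000000000 : ℝ) * 2^n
          + (1890462483/2000000000) * (2^n * ∏ i, Real.cos (7/10 * x i))
          + (13250783/200000000) * (2^n * ∏ i, Real.cos (7/5 * x i))
          + (299/800) * (2^n * ∏ i, Real.cos (14/5 * x i)) := by
      rw [Finset.sum_add_distrib, Finset.sum_add_distrib, Finset.sum_add_distrib,
        Finset.sum_const, nsmul_eq_mul, ← Finset.mul_sum, ← Finset.mul_sum, ← Finset.mul_sum,
        hsum1, hsum2, hsum3, card_univ_bool]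
      ring
    have hmark := count_markov x Finset.univ (797/100) (by norm_num)
    rw [hx] at hmark
    have hcT : (T.card : ℝ) ≤ 3 * 2^n / (797/100)^4 := by
      rw [le_div_iff₀ (by norm_num : (0:ℝ) < ((797:ℝ)/100)^4)]
      calc (T.card : ℝ) * (797/100)^4 ≤ 3 * 2^n * 1^2 := hmark
        _ = 3 * 2^n := by norm_num
    have e1 : (1890462483/2000000000 : ℝ) * (2^n * ((9307/10000 : ℝ)^(3:ℕ) * (9647/10000)))
        ≤ (1890462483/2000000000) * (2^n * ∏ i, Real.cos (7/10 * x i)) :=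
      mul_le_mul_of_nonneg_left (mul_le_mul_of_nonneg_left hprod1 hN.le) (by norm_num)
    have e2 : (13250783/200000000 : ℝ) * (2^n * ((7312/10000 : ℝ)^(3:ℕ) * (8551/10000)))
        ≤ (13250783/200000000) * (2^n * ∏ i, Real.cos (7/5 * x i)) :=
      mul_le_mul_of_nonneg_left (mul_le_mul_of_nonneg_left hprod2 hN.le) (by norm_num)
    have e3 : (0:ℝ) ≤ (299/800) * (2^n * ∏ i, Real.cos (14/5 * x i)) :=
      mul_nonneg (by norm_num) (mul_nonneg hN.le hprod3)
    have hnum : ((9:ℝ)/25 + 3/((797:ℝ)/100)^4)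
        ≤ (-1213169831913/3125000000000 : ℝ)
          + (1890462483/2000000000) * ((9307/10000 : ℝ)^(3:ℕ) * (9647/10000))
          + (13250783/200000000) * ((7312/10000 : ℝ)^(3:ℕ) * (8551/10000)) := by
      norm_num
    have hnumN := mul_le_mul_of_nonneg_right hnum hN.le
    have hdiv : 3 * (2:ℝ)^n / ((797:ℝ)/100)^4 = (3/((797:ℝ)/100)^4) * 2^n := by ring
    rw [hdiv] at hcT
    linarith [hminsum, hexpand, e1, e2, e3, hcT, hnumN]
end

section
/- Let n ≥ 2, let x = (x_1, …, x_n) ∈ ℝ^n with x_1 ≥ x_2 ≥ … ≥ x_n ≥ 0, Σ_{i=1}^n x_i² = 1 and x_1 + x_2 > 1, and let ε_1, …, ε_n be independent random variables with Pr(ε_i = 1) = Pr(ε_i = −1) = 1/2. Set r = Σ_{i=3}^n ε_i x_i (an empty sum being 0). Then Pr(|Σ_{i=1}^n ε_i x_i| ≤ 1) ≥ (1/4)·( Pr(|r| ≤ 1 + x_1 + x_2) + Pr(|r| ≤ 1 + x_1 − x_2) ). -/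
open Classical Finset

/-- normalization: set the first two coordinates to `true`. -/
def nrm (n : ℕ) (σ : Fin n → Bool) : Fin n → Bool := fun i => if (i : ℕ) < 2 then true else σ i

/-- put signs `s`, `t` into the first two coordinates. -/
def emb (n : ℕ) (τ : Fin n → Bool) (s t : Bool) : Fin n → Bool :=
  fun i => if (i : ℕ) = 0 then s else if (i : ℕ) = 1 then t else τ i

lemma nrm_idem (n : ℕ) (σ : Fin n → Bool) : nrm n (nrm n σ) = nrm n σ := by
  funext i; simp only [nrm]; by_cases h : (i : ℕ) < 2 <;> simp [h]

lemma keyA (a b ρ : ℝ) (hb : 0 ≤ b) (hba : b ≤ a) (ha : a ≤ 1) (hρ : |ρ| ≤ 1 + a + b) :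
    ∃ s t : Bool, |sgn s * a + sgn t * b + ρ| ≤ 1 := by
  rw [abs_le] at hρ
  rcases le_total 0 ρ with h | h
  · rcases le_total (a + b - 1) ρ with h' | h'
    · exact ⟨false, false, by rw [abs_le]; simp only [sgn]; norm_num; constructor <;> linarith⟩
    · exact ⟨false, true, by rw [abs_le]; simp only [sgn]; norm_num; constructor <;> linarith⟩
  · rcases le_total ρ (1 - a - b) with h' | h'
    · exact ⟨true, true, by rw [abs_le]; simp only [sgn]; norm_num; constructor <;> linarith⟩
    · exact ⟨true, false, by rw [abs_le]; simp only [sgn]; norm_num; constructor <;> linarith⟩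

lemma keyB (a b ρ : ℝ) (hb : 0 ≤ b) (hba : b ≤ a) (ha : a ≤ 1) (hρ : |ρ| ≤ 1 + a - b) :
    ∃ s t s' t' : Bool, (s, t) ≠ (s', t') ∧ |sgn s * a + sgn t * b + ρ| ≤ 1 ∧
      |sgn s' * a + sgn t' * b + ρ| ≤ 1 := by
  rw [abs_le] at hρ
  rcases le_total 0 ρ with h | h
  · rcases le_total (a + b - 1) ρ with h' | h'
    · refine ⟨false, true, false, false, by decide, ?_, ?_⟩ <;>
        (rw [abs_le]; simp only [sgn]; norm_num; constructor <;> linarith)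
    · refine ⟨false, true, true, false, by decide, ?_, ?_⟩ <;>
        (rw [abs_le]; simp only [sgn]; norm_num; constructor <;> linarith)
  · rcases le_total ρ (1 - a - b) with h' | h'
    · refine ⟨true, false, true, true, by decide, ?_, ?_⟩ <;>
        (rw [abs_le]; simp only [sgn]; norm_num; constructor <;> linarith)
    · refine ⟨true, false, false, true, by decide, ?_, ?_⟩ <;>
        (rw [abs_le]; simp only [sgn]; norm_num; constructor <;> linarith)

theorem stmt1 (n : ℕ) (hn : 2 ≤ n) (x : Fin n → ℝ)
    (hmono : ∀ i j : Fin n, i ≤ j → x j ≤ x i)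
    (hnonneg : ∀ i, 0 ≤ x i)
    (hx : ∑ i, (x i) ^ 2 = 1)
    (h12 : x ⟨0, by omega⟩ + x ⟨1, by omega⟩ > 1)
    (r : (Fin n → Bool) → ℝ)
    (hr : ∀ σ, r σ = ∑ i ∈ Finset.univ.filter (fun i : Fin n => 2 ≤ (i : ℕ)),
      sgn (σ i) * x i) :
    prSign n (fun σ => |∑ i, sgn (σ i) * x i| ≤ 1) ≥
      (1 / 4) * (prSign n (fun σ => |r σ| ≤ 1 + x ⟨0, by omega⟩ + x ⟨1, by omega⟩)
        + prSign n (fun σ => |r σ| ≤ 1 + x ⟨0, by omega⟩ - x ⟨1, by omega⟩)) := by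
  have h0n : 0 < n := by omega
  have h1n : 1 < n := by omega
  set i0 : Fin n := ⟨0, by omega⟩ with hi0
  set i1 : Fin n := ⟨1, by omega⟩ with hi1
  set a : ℝ := x i0 with hadef
  set b : ℝ := x i1 with hbdef
  have hb0 : 0 ≤ b := hnonneg i1
  have hba : b ≤ a := hmono i0 i1 (by simp [hi0, hi1, Fin.le_def])
  have ha1 : a ≤ 1 := by
    have h1 : a ^ 2 ≤ ∑ i, (x i) ^ 2 :=
      Finset.single_le_sum (fun i _ => sq_nonneg (x i)) (mem_univ i0)
    nlinarith [hnonneg i0]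
  -- sum decomposition
  have huniv : (univ : Finset (Fin n)) =
      insert i0 (insert i1 (univ.filter (fun i : Fin n => 2 ≤ (i : ℕ)))) := by
    ext i
    simp only [mem_univ, mem_insert, mem_filter, true_iff, true_and]
    by_cases h0 : (i : ℕ) = 0
    · exact Or.inl (Fin.ext h0)
    · by_cases h1 : (i : ℕ) = 1
      · exact Or.inr (Or.inl (Fin.ext h1))
      · exact Or.inr (Or.inr (by omega))
  have hnm1 : i1 ∉ (univ.filter (fun i : Fin n => 2 ≤ (i : ℕ))) := by
    simp [hi1]
  have hnm0 : i0 ∉ insert i1 (univ.filter (fun i : Fin n => 2 ≤ (i : ℕ))) := by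
    simp [hi0, hi1, Fin.ext_iff]
  have hsplit : ∀ σ : Fin n → Bool,
      ∑ i, sgn (σ i) * x i = sgn (σ i0) * a + sgn (σ i1) * b + r σ := by
    intro σ
    rw [hr σ]
    calc ∑ i, sgn (σ i) * x i
        = ∑ i ∈ insert i0 (insert i1 (univ.filter (fun i : Fin n => 2 ≤ (i : ℕ)))),
            sgn (σ i) * x i := by rw [← huniv]
      _ = sgn (σ i0) * a + sgn (σ i1) * b +
            ∑ i ∈ univ.filter (fun i : Fin n => 2 ≤ (i : ℕ)), sgn (σ i) * x i := by
          rw [Finset.sum_insert hnm0, Finset.sum_insert hnm1]; ring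
  -- emb facts
  have hemb0 : ∀ τ s t, emb n τ s t i0 = s := by intro τ s t; simp [emb, hi0]
  have hemb1 : ∀ τ s t, emb n τ s t i1 = t := by intro τ s t; simp [emb, hi1]
  have hrfix : ∀ τ s t, r (emb n τ s t) = r τ := by
    intro τ s t
    rw [hr, hr]
    refine Finset.sum_congr rfl fun i hi => ?_
    simp only [mem_filter, mem_univ, true_and] at hi
    have h0 : ¬ (i : ℕ) = 0 := by omega
    have h1 : ¬ (i : ℕ) = 1 := by omega
    simp [emb, h0, h1]
  have hval : ∀ τ s t, ∑ i, sgn (emb n τ s t i) * x i = sgn s * a + sgn t * b + r τ := by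
    intro τ s t
    rw [hsplit, hemb0, hemb1, hrfix]
  have hembnrm : ∀ τ s t, nrm n τ = τ → nrm n (emb n τ s t) = τ := by
    intro τ s t hτ
    funext i
    by_cases h : (i : ℕ) < 2
    · have := congrFun hτ i
      simp only [nrm, if_pos h] at this ⊢
      exact this
    · have h0 : ¬ (i : ℕ) = 0 := by omega
      have h1 : ¬ (i : ℕ) = 1 := by omega
      simp [nrm, emb, h, h0, h1]
  have hrecon : ∀ σ τ, nrm n σ = τ → emb n τ (σ i0) (σ i1) = σ := by
    intro σ τ hσ
    funext i
    by_cases h0 : (i : ℕ) = 0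
    · have : i = i0 := Fin.ext h0
      simp [emb, h0, this, hi0]
    · by_cases h1 : (i : ℕ) = 1
      · have : i = i1 := Fin.ext h1
        simp [emb, h0, h1, this, hi1]
      · have h2 : ¬ (i : ℕ) < 2 := by omega
        have := congrFun hσ i
        simp only [nrm, if_neg h2] at this
        simp [emb, h0, h1, this]
  have hembinj : ∀ τ s t s' t', emb n τ s t = emb n τ s' t' → (s, t) = (s', t') := by
    intro τ s t s' t' h
    have e0 := congrFun h i0
    have e1 := congrFun h i1
    rw [hemb0, hemb0] at e0
    rw [hemb1, hemb1] at e1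
    rw [e0, e1]
  -- the three sets
  set G : Finset (Fin n → Bool) := univ.filter (fun σ => |∑ i, sgn (σ i) * x i| ≤ 1) with hG
  set A : Finset (Fin n → Bool) := univ.filter (fun σ => |r σ| ≤ 1 + a + b) with hA
  set B : Finset (Fin n → Bool) := univ.filter (fun σ => |r σ| ≤ 1 + a - b) with hB
  have hfour : ∀ (τ : Fin n → Bool) (s : Finset (Fin n → Bool)),
      (s.filter (fun σ => nrm n σ = τ)).card ≤ 4 := by
    intro τ s
    have hsub : (s.filter (fun σ => nrm n σ = τ)) ⊆
        (univ : Finset (Bool × Bool)).image (fun p => emb n τ p.1 p.2) := by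
      intro σ hσ
      rw [mem_filter] at hσ
      rw [mem_image]
      exact ⟨(σ i0, σ i1), mem_univ _, hrecon σ τ hσ.2⟩
    calc (s.filter (fun σ => nrm n σ = τ)).card
        ≤ ((univ : Finset (Bool × Bool)).image (fun p => emb n τ p.1 p.2)).card :=
          Finset.card_le_card hsub
      _ ≤ (univ : Finset (Bool × Bool)).card := Finset.card_image_le
      _ = 4 := by simp
  have hfib : ∀ τ : Fin n → Bool,
      (A.filter (fun σ => nrm n σ = τ)).card + (B.filter (fun σ => nrm n σ = τ)).card
        ≤ 4 * (G.filter (fun σ => nrm n σ = τ)).card := by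
    intro τ
    by_cases hτ : nrm n τ = τ
    · have hrτ : ∀ σ, nrm n σ = τ → r σ = r τ := by
        intro σ hσ
        conv_lhs => rw [← hrecon σ τ hσ]
        exact hrfix τ _ _
      have hmemG : ∀ s t : Bool, |sgn s * a + sgn t * b + r τ| ≤ 1 →
          emb n τ s t ∈ G.filter (fun σ => nrm n σ = τ) := by
        intro s t hst
        rw [mem_filter, hG, mem_filter]
        exact ⟨⟨mem_univ _, by rw [hval]; exact hst⟩, hembnrm τ s t hτ⟩
      by_cases hAc : |r τ| ≤ 1 + a + b
      · by_cases hBc : |r τ| ≤ 1 + a - b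
        · obtain ⟨s, t, s', t', hne, h1, h2⟩ := keyB a b (r τ) hb0 hba ha1 hBc
          have hcard2 : 2 ≤ (G.filter (fun σ => nrm n σ = τ)).card := by
            refine Finset.one_lt_card.mpr ⟨emb n τ s t, hmemG s t h1, emb n τ s' t', hmemG s' t' h2, ?_⟩
            intro h
            exact hne (hembinj τ s t s' t' h)
          have := hfour τ A
          have := hfour τ B
          omega
        · have hBe : (B.filter (fun σ => nrm n σ = τ)) = ∅ := by
            refine Finset.filter_eq_empty_iff.mpr fun σ hσ hσn => ?_
            rw [hB, mem_filter] at hσ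
            exact hBc (by rw [← hrτ σ hσn]; exact hσ.2)
          obtain ⟨s, t, h1⟩ := keyA a b (r τ) hb0 hba ha1 hAc
          have hcard1 : 1 ≤ (G.filter (fun σ => nrm n σ = τ)).card :=
            Finset.card_pos.mpr ⟨emb n τ s t, hmemG s t h1⟩
          have := hfour τ A
          rw [hBe]
          simp only [Finset.card_empty]
          omega
      · have hAe : (A.filter (fun σ => nrm n σ = τ)) = ∅ := by
          refine Finset.filter_eq_empty_iff.mpr fun σ hσ hσn => ?_
          rw [hA, mem_filter] at hσ
          exact hAc (by rw [← hrτ σ hσn]; exact hσ.2)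
        have hBe : (B.filter (fun σ => nrm n σ = τ)) = ∅ := by
          refine Finset.filter_eq_empty_iff.mpr fun σ hσ hσn => ?_
          rw [hB, mem_filter] at hσ
          have : |r σ| ≤ 1 + a - b := hσ.2
          exact hAc (by rw [← hrτ σ hσn]; linarith)
        rw [hAe, hBe]
        simp
    · have he : ∀ (s : Finset (Fin n → Bool)), (s.filter (fun σ => nrm n σ = τ)) = ∅ := by
        intro s
        refine Finset.filter_eq_empty_iff.mpr fun σ _ hσn => ?_
        exact hτ (by rw [← hσn, nrm_idem])
      rw [he A, he B, he G]
      simp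
  -- sum up the fiberwise inequality
  have hcardA : A.card = ∑ τ ∈ (univ : Finset (Fin n → Bool)),
      (A.filter (fun σ => nrm n σ = τ)).card :=
    Finset.card_eq_sum_card_fiberwise (fun σ _ => mem_univ _)
  have hcardB : B.card = ∑ τ ∈ (univ : Finset (Fin n → Bool)),
      (B.filter (fun σ => nrm n σ = τ)).card :=
    Finset.card_eq_sum_card_fiberwise (fun σ _ => mem_univ _)
  have hcardG : G.card = ∑ τ ∈ (univ : Finset (Fin n → Bool)),
      (G.filter (fun σ => nrm n σ = τ)).card :=
    Finset.card_eq_sum_card_fiberwise (fun σ _ => mem_univ _)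
  have hmain : A.card + B.card ≤ 4 * G.card := by
    rw [hcardA, hcardB, hcardG, Finset.mul_sum, ← Finset.sum_add_distrib]
    exact Finset.sum_le_sum fun τ _ => hfib τ
  -- conclude
  have hmainR : (A.card : ℝ) + B.card ≤ 4 * G.card := by exact_mod_cast hmain
  have h2 : (0 : ℝ) < 2 ^ n := by positivity
  rw [ge_iff_le]
  show (1 : ℝ) / 4 * ((A.card : ℝ) / 2 ^ n + (B.card : ℝ) / 2 ^ n) ≤ (G.card : ℝ) / 2 ^ n
  rw [← add_div, mul_comm, mul_one_div, div_div,
    div_le_div_iff₀ (by positivity) h2]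
  nlinarith [h2, hmainR]
end

section
/- Let Y be a real-valued random variable whose distribution is symmetric (Y and −Y have the same distribution), let x ∈ [0, 1], and let c ∈ ℝ satisfy 1 − x ≤ |c| ≤ 1. Then Pr(|c + Y| ≤ 1) ≥ (1/2)·Pr(|Y| ≤ 2 − x). -/
open MeasureTheory ENNReal

theorem stmt9 {Ω : Type*} [MeasurableSpace Ω] (μ : Measure Ω) [IsProbabilityMeasure μ]
    (Y : Ω → ℝ) (hY : Measurable Y)
    (hsym : μ.map Y = μ.map (fun ω => -Y ω))
    (x : ℝ) (hx : x ∈ Set.Icc (0 : ℝ) 1)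
    (c : ℝ) (hc1 : 1 - x ≤ |c|) (hc2 : |c| ≤ 1) :
    μ {ω | |c + Y ω| ≤ 1} ≥ (1 / 2) * μ {ω | |Y ω| ≤ 2 - x} := by
  obtain ⟨hx0, hx1⟩ := hx
  set a : ℝ := 2 - x with ha
  -- symmetry: μ(Y ∈ [-a,0]) = μ(Y ∈ [0,a])
  have hsymm : μ (Y ⁻¹' Set.Icc (-a) 0) = μ (Y ⁻¹' Set.Icc 0 a) := by
    have h1 : μ.map Y (Set.Icc (-a) 0) = μ.map (fun ω => -Y ω) (Set.Icc (-a) 0) := by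
      rw [hsym]
    rw [Measure.map_apply hY measurableSet_Icc,
      Measure.map_apply (f := fun ω => -Y ω) hY.neg measurableSet_Icc] at h1
    have h2 : ((fun ω => -Y ω) ⁻¹' Set.Icc (-a) 0) = Y ⁻¹' Set.Icc 0 a := by
      ext ω
      simp only [Set.mem_preimage, Set.mem_Icc]
      constructor <;> intro h <;> exact ⟨by linarith [h.1, h.2], by linarith [h.1, h.2]⟩
    rw [h2] at h1
    exact h1
  have hcover : μ {ω | |Y ω| ≤ 2 - x} ≤ μ (Y ⁻¹' Set.Icc (-a) 0) + μ (Y ⁻¹' Set.Icc 0 a) := by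
    refine le_trans (measure_mono ?_) (measure_union_le _ _)
    intro ω hω
    simp only [Set.mem_setOf_eq, abs_le] at hω
    rcases le_total (Y ω) 0 with h | h
    · exact Or.inl ⟨hω.1, h⟩
    · exact Or.inr ⟨h, hω.2⟩
  have key : (1 / 2 : ℝ≥0∞) * μ {ω | |Y ω| ≤ 2 - x} ≤ μ (Y ⁻¹' Set.Icc (-a) 0) := by
    have h3 : μ {ω | |Y ω| ≤ 2 - x} ≤ 2 * μ (Y ⁻¹' Set.Icc (-a) 0) := by
      rw [two_mul]
      calc μ {ω | |Y ω| ≤ 2 - x} ≤ μ (Y ⁻¹' Set.Icc (-a) 0) + μ (Y ⁻¹' Set.Icc 0 a) := hcover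
        _ = μ (Y ⁻¹' Set.Icc (-a) 0) + μ (Y ⁻¹' Set.Icc (-a) 0) := by rw [hsymm]
    calc (1 / 2 : ℝ≥0∞) * μ {ω | |Y ω| ≤ 2 - x}
        ≤ (1 / 2 : ℝ≥0∞) * (2 * μ (Y ⁻¹' Set.Icc (-a) 0)) := by
          exact mul_le_mul_right h3 _
      _ = μ (Y ⁻¹' Set.Icc (-a) 0) := by
          rw [← mul_assoc]
          have : (1 / 2 : ℝ≥0∞) * 2 = 1 := by
            rw [one_div, ENNReal.inv_mul_cancel (by norm_num) (by norm_num)]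
          rw [this, one_mul]
  rcases le_total 0 c with hc | hc
  · rw [abs_of_nonneg hc] at hc1 hc2
    have hsub : Y ⁻¹' Set.Icc (-a) 0 ⊆ {ω | |c + Y ω| ≤ 1} := by
      intro ω hω
      simp only [Set.mem_preimage, Set.mem_Icc] at hω
      simp only [Set.mem_setOf_eq, abs_le]
      constructor <;> [linarith [hω.1]; linarith [hω.2]]
    exact le_trans key (measure_mono hsub)
  · rw [abs_of_nonpos hc] at hc1 hc2
    have hsub : Y ⁻¹' Set.Icc 0 a ⊆ {ω | |c + Y ω| ≤ 1} := by
      intro ω hω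
      simp only [Set.mem_preimage, Set.mem_Icc] at hω
      simp only [Set.mem_setOf_eq, abs_le]
      constructor <;> [linarith [hω.1]; linarith [hω.2]]
    rw [hsymm] at key
    exact le_trans key (measure_mono hsub)
end

section
/- Let n ≥ 3, let x = (x_1, …, x_n) ∈ ℝ^n with x_1 ≥ x_2 ≥ … ≥ x_n ≥ 0, Σ_{i=1}^n x_i² = 1 and x_1 + x_2 ≤ 1, and let ε_1, …, ε_n be independent random variables with Pr(ε_i = 1) = Pr(ε_i = −1) = 1/2. For 1 ≤ j ≤ n set s_j = Σ_{i=1}^j ε_i x_i; for 2 ≤ k ≤ n − 1 let A_k be the event { |s_j| ≤ 1 − x_{j+1} for j = 1, …, k−1, and |s_k| > 1 − x_{k+1} }. If Pr(A_k) > 0, then the conditional probability satisfies Pr(|s_n| ≤ 1 | A_k) ≥ max{ g_k(x_{k+1}), h_k(x_{k+1}) }, where g_k(x) = (1/2)·(1 − (1 − k x²)/(2 − x)²) and h_k(x) = (1/2)·(1 − (1 − (1 − x)²/k)/(2 − x)²). -/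
open Classical Finset

/-- The function `g_k(x) = (1/2)(1 - (1 - k x²)/(2 - x)²)`. -/
noncomputable def gfun (k : ℕ) (x : ℝ) : ℝ :=
  (1 / 2) * (1 - (1 - (k : ℝ) * x ^ 2) / (2 - x) ^ 2)

/-- The function `h_k(x) = (1/2)(1 - (1 - (1 - x)²/k)/(2 - x)²)`. -/
noncomputable def hfun (k : ℕ) (x : ℝ) : ℝ :=
  (1 / 2) * (1 - (1 - (1 - x) ^ 2 / (k : ℝ)) / (2 - x) ^ 2)

lemma sgn_not (b : Bool) : sgn (!b) = - sgn b := by cases b <;> simp [sgn]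

lemma sgn_mul_self (b : Bool) : sgn b * sgn b = 1 := by cases b <;> simp [sgn]

lemma abs_sgn (b : Bool) : |sgn b| = 1 := by cases b <;> simp [sgn]

lemma key_div (N Sc Bc V D q : ℝ) (hD : 0 < D) (hN : 0 < N)
    (hcount : N ≤ 2 * Sc + Bc) (hvar : Bc * D ≤ N * V) (hVq : V ≤ q) :
    1 / 2 * (1 - q / D) * N ≤ Sc := by
  have h1 : Bc * D ≤ N * q := le_trans hvar (mul_le_mul_of_nonneg_left hVq hN.le)
  have h2 : N * D ≤ (2 * Sc + Bc) * D := mul_le_mul_of_nonneg_right hcount hD.le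
  have hq : q / D * D = q := div_mul_cancel₀ _ (ne_of_gt hD)
  have hqN : q / D * D * N = q * N := by rw [hq]
  nlinarith [h1, h2, hD, hqN]

lemma lt_abs' {a b : ℝ} : a < |b| ↔ a < b ∨ a < -b := by
  rcases abs_cases b with ⟨h1, h2⟩ | ⟨h1, h2⟩ <;> rw [h1] <;> constructor
  · exact Or.inl
  · rintro (h | h) <;> linarith
  · exact Or.inr
  · rintro (h | h) <;> linarith

theorem stmt18 (n : ℕ) (hn : 3 ≤ n) (x : Fin n → ℝ)
    (hmono : ∀ i j : Fin n, i ≤ j → x j ≤ x i)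
    (hnonneg : ∀ i, 0 ≤ x i)
    (hx : ∑ i, (x i) ^ 2 = 1)
    (h12 : x ⟨0, by omega⟩ + x ⟨1, by omega⟩ ≤ 1)
    (s : (Fin n → Bool) → ℕ → ℝ)
    (hs : ∀ σ j, s σ j =
      ∑ i ∈ Finset.univ.filter (fun i : Fin n => (i : ℕ) < j), sgn (σ i) * x i)
    (k : ℕ) (hk2 : 2 ≤ k) (hkn : k ≤ n - 1)
    (A : Set (Fin n → Bool))
    (hA : A = {σ | (∀ j (hj1 : 1 ≤ j) (hjk : j ≤ k - 1), |s σ j| ≤ 1 - x ⟨j, by omega⟩) ∧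
        1 - x ⟨k, by omega⟩ < |s σ k|})
    (hpos : prSign n (fun σ => σ ∈ A) > 0) :
    prSign n (fun σ => |s σ n| ≤ 1 ∧ σ ∈ A) / prSign n (fun σ => σ ∈ A)
      ≥ max (gfun k (x ⟨k, by omega⟩)) (hfun k (x ⟨k, by omega⟩)) := by
  classical
  have hkn' : k < n := by omega
  have hk1n : k - 1 < n := by omega
  set a : ℝ := x ⟨k, hkn'⟩ with ha_def
  have hmemA : ∀ σ, σ ∈ A ↔
      ((∀ j, 1 ≤ j → j ≤ k - 1 → ∀ hj : j < n, |s σ j| ≤ 1 - x ⟨j, hj⟩) ∧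
        1 - a < |s σ k|) := by
    intro σ
    rw [hA, Set.mem_setOf_eq]
    constructor
    · rintro ⟨h1, h2⟩
      exact ⟨fun j hj1 hjk hj => h1 j hj1 hjk, h2⟩
    · rintro ⟨h1, h2⟩
      exact ⟨fun j hj1 hjk => h1 j hj1 hjk (lt_of_le_of_lt hjk hk1n), h2⟩
  have ha0 : 0 ≤ a := hnonneg _
  have ha1 : a ≤ 1 := by
    have h1 : a ^ 2 ≤ 1 := by
      rw [← hx]
      exact Finset.single_le_sum (fun i _ => sq_nonneg (x i)) (Finset.mem_univ _)
    nlinarith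
  -- index sets
  set K : Finset (Fin n) := Finset.univ.filter (fun i : Fin n => (i : ℕ) < k) with hK_def
  set R : Finset (Fin n) := Finset.univ.filter (fun i : Fin n => ¬ (i : ℕ) < k) with hR_def
  set t : (Fin n → Bool) → ℝ := fun σ => ∑ i ∈ R, sgn (σ i) * x i with ht_def
  -- s depends only on low coordinates
  have hs_congr : ∀ (σ σ' : Fin n → Bool) (j : ℕ), j ≤ k →
      (∀ i : Fin n, (i : ℕ) < k → σ i = σ' i) → s σ j = s σ' j := by
    intro σ σ' j hj hagree
    rw [hs, hs]
    refine Finset.sum_congr rfl ?_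
    intro i hi
    rw [Finset.mem_filter] at hi
    rw [hagree i (by omega)]
  have hA_congr : ∀ (σ σ' : Fin n → Bool), (∀ i : Fin n, (i : ℕ) < k → σ i = σ' i) →
      σ ∈ A → σ' ∈ A := by
    intro σ σ' hagree hσ
    rw [hmemA] at hσ ⊢
    constructor
    · intro j hj1 hjk
      intro hj
      rw [← hs_congr σ σ' j (by omega) hagree]
      exact hσ.1 j hj1 hjk hj
    · rw [← hs_congr σ σ' k le_rfl hagree]
      exact hσ.2
  -- decomposition s σ n = s σ k + t σ
  have hsn : ∀ σ, s σ n = s σ k + t σ := by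
    intro σ
    have h1 : Finset.univ.filter (fun i : Fin n => (i : ℕ) < n) = Finset.univ := by
      ext i; simp [i.isLt]
    have h2 := Finset.sum_filter_add_sum_filter_not Finset.univ
      (fun i : Fin n => (i : ℕ) < k) (fun i => sgn (σ i) * x i)
    rw [hs σ n, hs σ k, h1]
    exact h2.symm
  -- |s σ k| ≤ 1 on A
  have hsk_le_one : ∀ σ ∈ A, |s σ k| ≤ 1 := by
    intro σ hσ
    have hcond := ((hmemA σ).1 hσ).1 (k - 1) (by omega) le_rfl hk1n
    have hstep : s σ k = s σ (k - 1) + sgn (σ ⟨k - 1, hk1n⟩) * x ⟨k - 1, hk1n⟩ := by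
      rw [hs σ k, hs σ (k - 1)]
      have hins : Finset.univ.filter (fun i : Fin n => (i : ℕ) < k) =
          insert (⟨k - 1, hk1n⟩ : Fin n)
            (Finset.univ.filter (fun i : Fin n => (i : ℕ) < k - 1)) := by
        ext i
        simp only [Finset.mem_filter, Finset.mem_univ, true_and, Finset.mem_insert,
          Fin.ext_iff]
        omega
      rw [hins, Finset.sum_insert (by simp)]
      ring
    have habs : |sgn (σ ⟨k - 1, hk1n⟩) * x ⟨k - 1, hk1n⟩| = x ⟨k - 1, hk1n⟩ := by
      rw [abs_mul, abs_sgn, one_mul, abs_of_nonneg (hnonneg _)]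
    calc |s σ k| ≤ |s σ (k - 1)| + |sgn (σ ⟨k - 1, hk1n⟩) * x ⟨k - 1, hk1n⟩| := by
          rw [hstep]; exact abs_add_le _ _
      _ ≤ (1 - x ⟨k - 1, hk1n⟩) + x ⟨k - 1, hk1n⟩ := by
          rw [habs]; linarith
      _ = 1 := by ring
  -- the finsets
  set Afin : Finset (Fin n → Bool) := Finset.univ.filter (fun σ => σ ∈ A) with hAfin_def
  set S : Finset (Fin n → Bool) := Afin.filter (fun σ => |s σ n| ≤ 1) with hS_def
  set F : Finset (Fin n → Bool) := Afin.filter (fun σ => ¬ |s σ n| ≤ 1) with hF_def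
  set B : Finset (Fin n → Bool) := Afin.filter (fun σ => 2 - a < |t σ|) with hB_def
  -- flip of the tail
  set flip : (Fin n → Bool) → (Fin n → Bool) :=
    fun σ i => if (i : ℕ) < k then σ i else !σ i with hflip_def
  have hflip_low : ∀ σ (i : Fin n), (i : ℕ) < k → flip σ i = σ i := by
    intro σ i hi; simp [hflip_def, hi]
  have hflip_flip : ∀ σ, flip (flip σ) = σ := by
    intro σ; funext i
    by_cases hi : (i : ℕ) < k <;> simp [hflip_def, hi]
  have hflip_inj : Function.Injective flip := by
    intro σ σ' h
    have := congrArg flip h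
    rwa [hflip_flip, hflip_flip] at this
  have hflip_A : ∀ σ, σ ∈ A → flip σ ∈ A := by
    intro σ hσ
    exact hA_congr σ (flip σ) (fun i hi => (hflip_low σ i hi).symm) hσ
  have hflip_sk : ∀ σ, s (flip σ) k = s σ k :=
    fun σ => hs_congr _ _ k le_rfl (fun i hi => hflip_low σ i hi)
  have hflip_t : ∀ σ, t (flip σ) = - t σ := by
    intro σ
    simp only [ht_def]
    rw [← Finset.sum_neg_distrib]
    refine Finset.sum_congr rfl ?_
    intro i hi
    rw [hR_def, Finset.mem_filter] at hi
    have : flip σ i = !σ i := by simp [hflip_def, hi.2]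
    rw [this, sgn_not]; ring
  -- bad set membership for double failures
  have hbad : ∀ σ, σ ∈ A → ¬ |s σ n| ≤ 1 → ¬ |s (flip σ) n| ≤ 1 → 2 - a < |t σ| := by
    intro σ hσ h1 h2
    push_neg at h1 h2
    rw [hsn] at h1 h2
    rw [hflip_sk, hflip_t] at h2
    have hc1 := hsk_le_one σ hσ
    have hca := ((hmemA σ).1 hσ).2
    rw [abs_le] at hc1
    rw [lt_abs'] at h1 h2 hca ⊢
    rcases h1 with h1 | h1 <;> rcases h2 with h2 | h2 <;> rcases hca with hca | hca <;>
      first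
        | (left; linarith)
        | (right; linarith)
        | (exfalso; linarith)
  -- counting: Afin.card ≤ 2 * S.card + B.card
  have hcount : Afin.card ≤ 2 * S.card + B.card := by
    have hSF : S.card + F.card = Afin.card := Finset.card_filter_add_card_filter_not _
    have hF12 : (F.filter (fun σ => flip σ ∈ F)).card
        + (F.filter (fun σ => ¬ flip σ ∈ F)).card = F.card :=
      Finset.card_filter_add_card_filter_not _
    have hF2B : F.filter (fun σ => flip σ ∈ F) ⊆ B := by
      intro σ hσ
      rw [Finset.mem_filter] at hσ
      have hσF := hσ.1
      rw [hF_def, Finset.mem_filter] at hσF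
      have hfσ := hσ.2
      rw [hF_def, Finset.mem_filter] at hfσ
      have hσA : σ ∈ A := by
        have := hσF.1; rw [hAfin_def, Finset.mem_filter] at this; exact this.2
      rw [hB_def, Finset.mem_filter]
      exact ⟨hσF.1, hbad σ hσA hσF.2 hfσ.2⟩
    have hF1S : (F.filter (fun σ => ¬ flip σ ∈ F)).card ≤ S.card := by
      apply Finset.card_le_card_of_injOn flip
      · intro σ hσ
        rw [Finset.mem_coe, Finset.mem_filter] at hσ
        have hσF := hσ.1
        rw [hF_def, Finset.mem_filter] at hσF
        have hσA : σ ∈ A := by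
          have := hσF.1; rw [hAfin_def, Finset.mem_filter] at this; exact this.2
        have hfA : flip σ ∈ A := hflip_A σ hσA
        have hfAfin : flip σ ∈ Afin := by
          rw [hAfin_def, Finset.mem_filter]; exact ⟨Finset.mem_univ _, hfA⟩
        rw [hS_def, Finset.mem_coe, Finset.mem_filter]
        refine ⟨hfAfin, ?_⟩
        by_contra hcon
        exact hσ.2 (by rw [hF_def, Finset.mem_filter]; exact ⟨hfAfin, hcon⟩)
      · intro σ _ σ' _ h
        exact hflip_inj h
    have : F.card ≤ S.card + B.card := by
      rw [← hF12]
      have := Finset.card_le_card hF2B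
      omega
    omega
  -- variance identity
  have hvar : ∑ σ ∈ Afin, (t σ) ^ 2 = (Afin.card : ℝ) * ∑ i ∈ R, (x i) ^ 2 := by
    have hexp : ∀ σ, (t σ) ^ 2 =
        ∑ i ∈ R, ∑ j ∈ R, (sgn (σ i) * x i) * (sgn (σ j) * x j) := by
      intro σ
      simp only [ht_def]
      rw [sq, Finset.sum_mul_sum]
    calc ∑ σ ∈ Afin, (t σ) ^ 2
        = ∑ σ ∈ Afin, ∑ i ∈ R, ∑ j ∈ R, (sgn (σ i) * x i) * (sgn (σ j) * x j) :=
          Finset.sum_congr rfl (fun σ _ => hexp σ)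
      _ = ∑ i ∈ R, ∑ σ ∈ Afin, ∑ j ∈ R, (sgn (σ i) * x i) * (sgn (σ j) * x j) :=
          Finset.sum_comm
      _ = ∑ i ∈ R, ∑ j ∈ R, ∑ σ ∈ Afin, (sgn (σ i) * x i) * (sgn (σ j) * x j) :=
          Finset.sum_congr rfl (fun i _ => Finset.sum_comm)
      _ = ∑ i ∈ R, (Afin.card : ℝ) * (x i) ^ 2 := by
          refine Finset.sum_congr rfl ?_
          intro i hiR
          rw [Finset.sum_eq_single_of_mem i hiR]
          · have heq : ∀ σ ∈ Afin, (sgn (σ i) * x i) * (sgn (σ i) * x i) = (x i) ^ 2 := by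
              intro σ _
              calc (sgn (σ i) * x i) * (sgn (σ i) * x i)
                  = (sgn (σ i) * sgn (σ i)) * (x i * x i) := by ring
                _ = (x i) ^ 2 := by rw [sgn_mul_self]; ring
            rw [Finset.sum_congr rfl heq, Finset.sum_const, nsmul_eq_mul]
          · intro j hjR hji
            -- sum over σ of cross term vanishes
            refine Finset.sum_involution
              (fun σ _ => Function.update σ j (!σ j)) ?_ ?_ ?_ ?_
            · intro σ hσ
              beta_reduce
              have hji' : i ≠ j := fun h => hji (h.symm)
              rw [Function.update_of_ne hji', Function.update_self, sgn_not]
              ring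
            · intro σ hσ h
              beta_reduce
              intro hcon
              have := congrFun hcon j
              rw [Function.update_self] at this
              simp at this
            · intro σ hσ
              beta_reduce
              rw [hAfin_def, Finset.mem_filter] at hσ ⊢
              refine ⟨Finset.mem_univ _, ?_⟩
              apply hA_congr σ _ _ hσ.2
              intro l hl
              have hjk' : ¬ (j : ℕ) < k := by
                rw [hR_def, Finset.mem_filter] at hjR; exact hjR.2
              have hlj : l ≠ j := by
                intro hcon; rw [hcon] at hl; exact hjk' hl
              rw [Function.update_of_ne hlj]
            · intro σ hσ
              beta_reduce
              funext l
              by_cases hl : l = j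
              · subst hl; simp
              · simp [Function.update_of_ne hl]
      _ = (Afin.card : ℝ) * ∑ i ∈ R, (x i) ^ 2 := by rw [Finset.mul_sum]
  -- Chebyshev bound
  have hD : (0:ℝ) < (2 - a) ^ 2 := by nlinarith
  have hcheb : (B.card : ℝ) * (2 - a) ^ 2 ≤ ∑ σ ∈ Afin, (t σ) ^ 2 := by
    have h1 : ∀ σ ∈ B, (2 - a) ^ 2 ≤ (t σ) ^ 2 := by
      intro σ hσ
      rw [hB_def, Finset.mem_filter] at hσ
      have h2 := hσ.2
      have h3 : (2 - a) ^ 2 ≤ |t σ| ^ 2 := pow_le_pow_left₀ (by linarith) h2.le 2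
      rwa [sq_abs] at h3
    calc (B.card : ℝ) * (2 - a) ^ 2 = ∑ _σ ∈ B, (2 - a) ^ 2 := by
          rw [Finset.sum_const, nsmul_eq_mul]
      _ ≤ ∑ σ ∈ B, (t σ) ^ 2 := Finset.sum_le_sum h1
      _ ≤ ∑ σ ∈ Afin, (t σ) ^ 2 := by
          apply Finset.sum_le_sum_of_subset_of_nonneg (Finset.filter_subset _ _)
          intro σ _ _; exact sq_nonneg _
  set V : ℝ := ∑ i ∈ R, (x i) ^ 2 with hV_def
  set Q : ℝ := ∑ i ∈ K, (x i) ^ 2 with hQ_def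
  have hsplit : Q + V = 1 := by
    rw [hQ_def, hV_def, hK_def, hR_def, ← hx]
    exact Finset.sum_filter_add_sum_filter_not _ _ _
  have hKcard : K.card = k := by
    have hbij : K.card = (Finset.range k).card := by
      apply Finset.card_bij (fun (i : Fin n) (_ : i ∈ K) => (i : ℕ))
      · intro i hi
        rw [hK_def, Finset.mem_filter] at hi
        exact Finset.mem_range.mpr hi.2
      · intro i hi i' hi' h
        exact Fin.ext h
      · intro m hm
        refine ⟨⟨m, by have := Finset.mem_range.mp hm; omega⟩, ?_, rfl⟩
        rw [hK_def, Finset.mem_filter]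
        exact ⟨Finset.mem_univ _, Finset.mem_range.mp hm⟩
    rw [hbij, Finset.card_range]
  have hQ1 : (k : ℝ) * a ^ 2 ≤ Q := by
    have h1 : ∀ i ∈ K, a ^ 2 ≤ (x i) ^ 2 := by
      intro i hi
      rw [hK_def, Finset.mem_filter] at hi
      have hik : (i : ℕ) < k := hi.2
      have hxa : a ≤ x i := hmono i ⟨k, hkn'⟩ (by simp only [Fin.le_def]; omega)
      exact pow_le_pow_left₀ ha0 hxa 2
    calc (k : ℝ) * a ^ 2 = (K.card : ℝ) * a ^ 2 := by rw [hKcard]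
      _ = ∑ _i ∈ K, a ^ 2 := by rw [Finset.sum_const, nsmul_eq_mul]
      _ ≤ Q := Finset.sum_le_sum h1
  -- positivity of the conditioning event
  have h2n : (0:ℝ) < 2 ^ n := by positivity
  have h2n' : (2:ℝ) ^ n ≠ 0 := ne_of_gt h2n
  unfold prSign at hpos
  rw [← hAfin_def] at hpos
  have hNpos : 0 < (Afin.card : ℝ) := by
    have hN : (Afin.card : ℝ) = ((Afin.card : ℝ) / 2 ^ n) * 2 ^ n :=
      (div_mul_cancel₀ _ h2n').symm
    rw [hN]
    exact mul_pos hpos h2n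
  have hAne : ∃ σ, σ ∈ A := by
    have hne : Afin.Nonempty := Finset.card_pos.mp (by exact_mod_cast hNpos)
    obtain ⟨σ0, hσ0⟩ := hne
    rw [hAfin_def, Finset.mem_filter] at hσ0
    exact ⟨σ0, hσ0.2⟩
  obtain ⟨σ0, hσ0⟩ := hAne
  have hT : 1 - a < ∑ i ∈ K, x i := by
    have h1 := ((hmemA σ0).1 hσ0).2
    have h2 : |s σ0 k| ≤ ∑ i ∈ K, x i := by
      rw [hs]
      refine le_trans (Finset.abs_sum_le_sum_abs _ _) (le_of_eq ?_)
      refine Finset.sum_congr rfl ?_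
      intro i _
      rw [abs_mul, abs_sgn, one_mul, abs_of_nonneg (hnonneg _)]
    linarith
  have hQ2 : (1 - a) ^ 2 ≤ (k : ℝ) * Q := by
    have hTnn : 0 ≤ ∑ i ∈ K, x i := Finset.sum_nonneg fun i _ => hnonneg i
    have h1 : (1 - a) ^ 2 ≤ (∑ i ∈ K, x i) ^ 2 :=
      pow_le_pow_left₀ (by linarith) hT.le 2
    have h2 : (∑ i ∈ K, x i) ^ 2 ≤ (K.card : ℝ) * ∑ i ∈ K, (x i) ^ 2 :=
      sq_sum_le_card_mul_sum_sq
    rw [hKcard] at h2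
    calc (1 - a) ^ 2 ≤ (∑ i ∈ K, x i) ^ 2 := h1
      _ ≤ (k : ℝ) * Q := h2
  have hk0 : (0:ℝ) < (k : ℝ) := by exact_mod_cast (by omega : 0 < k)
  have hV1 : V ≤ 1 - (k : ℝ) * a ^ 2 := by linarith
  have hV2 : V ≤ 1 - (1 - a) ^ 2 / (k : ℝ) := by
    have h1 : (1 - a) ^ 2 / (k : ℝ) ≤ Q := by
      rw [div_le_iff₀ hk0]; linarith
    linarith
  -- putting it together
  have hcountR : (Afin.card : ℝ) ≤ 2 * (S.card : ℝ) + (B.card : ℝ) := by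
    exact_mod_cast hcount
  have hvar' : (B.card : ℝ) * (2 - a) ^ 2 ≤ (Afin.card : ℝ) * V :=
    le_trans hcheb (le_of_eq hvar)
  have hSr : (0:ℝ) ≤ (S.card : ℝ) := Nat.cast_nonneg _
  have hBr : (0:ℝ) ≤ (B.card : ℝ) := Nat.cast_nonneg _
  have hPr1 : prSign n (fun σ => |s σ n| ≤ 1 ∧ σ ∈ A) = (S.card : ℝ) / 2 ^ n := by
    unfold prSign
    congr 3
    ext σ
    simp only [Finset.mem_filter, Finset.mem_univ, true_and, hS_def, hAfin_def]
    tauto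
  have hPr2 : prSign n (fun σ => σ ∈ A) = (Afin.card : ℝ) / 2 ^ n := by
    unfold prSign
    rw [← hAfin_def]
  rw [ge_iff_le]
  rw [hPr1]
  rw [hPr2]
  rw [div_div_div_comm, div_self h2n', div_one]
  show max (gfun k a) (hfun k a) ≤ (S.card : ℝ) / (Afin.card : ℝ)
  show max (gfun k a) (hfun k a) ≤ (S.card : ℝ) / (Afin.card : ℝ)
  have hNV : (Afin.card : ℝ) * V ≤ (Afin.card : ℝ) * (1 - (k:ℝ) * a ^ 2) :=
    mul_le_mul_of_nonneg_left hV1 hNpos.le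
  have hNV2 : (Afin.card : ℝ) * V ≤ (Afin.card : ℝ) * (1 - (1 - a) ^ 2 / (k:ℝ)) :=
    mul_le_mul_of_nonneg_left hV2 hNpos.le
  apply max_le
  · rw [gfun, le_div_iff₀ hNpos]
    exact key_div _ _ _ _ _ _ hD hNpos hcountR hvar' hV1
  · rw [hfun, le_div_iff₀ hNpos]
    exact key_div _ _ _ _ _ _ hD hNpos hcountR hvar' hV2
end
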